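/- arXiv:1512.07580 — 6 statements merged into one kernel-verified Lean document; each statement's English description precedes it below -/
import Mathlib

section
/- In the simplex category Δ, every morphism a : [m] → [n] admits a factorisation a = f ∘ g with g generic and f free, and this factorisation is unique: if f ∘ g = f' ∘ g' with g, g' generic and f, f' free, then g and g' have the same codomain, g = g' and f = f'. -/
/-!
STATEMENT 0: In the simplex category Δ, every morphism `a : [m] → [n]` admits a
factorisation `a = f ∘ g` with `g` generic and `f` free, and this factorisation is
unique (including the intermediate object).
-/

open CategoryTheory

namespace DS3

/-- A morphism of the simplex category is *generic* (endpoint-preserving) if it preserves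
the bottom and the top element. -/
def IsGeneric {m n : SimplexCategory} (a : m ⟶ n) : Prop :=
  a.toOrderHom 0 = 0 ∧ a.toOrderHom (Fin.last m.len) = Fin.last n.len

/-- A morphism of the simplex category is *free* (distance-preserving) if
`a (i+1) = a i + 1` for all `0 ≤ i ≤ m-1`. -/
def IsFree {m n : SimplexCategory} (a : m ⟶ n) : Prop :=
  ∀ i : Fin m.len, (a.toOrderHom i.succ : ℕ) = (a.toOrderHom i.castSucc : ℕ) + 1

lemma free_apply {k n : SimplexCategory} (f : k ⟶ n) (hf : IsFree f)
    (j : Fin (k.len + 1)) :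
    (f.toOrderHom j : ℕ) = (f.toOrderHom 0 : ℕ) + j := by
  induction j using Fin.induction with
  | zero => simp
  | succ i ih =>
      rw [hf i, ih]
      simp [Nat.add_assoc, Fin.val_succ]

/-- Every morphism of `Δ` factors uniquely as a generic map followed by a free map. -/
theorem generic_free_factorisation_unique {m n : SimplexCategory} (a : m ⟶ n) :
    ∃ (k : SimplexCategory) (g : m ⟶ k) (f : k ⟶ n),
      IsGeneric g ∧ IsFree f ∧ g ≫ f = a ∧
      ∀ (k' : SimplexCategory) (g' : m ⟶ k') (f' : k' ⟶ n),
        IsGeneric g' → IsFree f' → g' ≫ f' = a →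
        k' = k ∧ HEq g' g ∧ HEq f' f := by
  set a0 : ℕ := (a.toOrderHom 0 : ℕ) with ha0
  set am : ℕ := (a.toOrderHom (Fin.last m.len) : ℕ) with ham
  have hmono : ∀ i : Fin (m.len + 1), a0 ≤ (a.toOrderHom i : ℕ) := fun i =>
    a.toOrderHom.monotone (Fin.zero_le i)
  have hle : ∀ i : Fin (m.len + 1), (a.toOrderHom i : ℕ) ≤ am := fun i =>
    a.toOrderHom.monotone (Fin.le_last i)
  have hamn : am ≤ n.len := Nat.lt_succ_iff.mp (a.toOrderHom (Fin.last m.len)).isLt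
  refine ⟨SimplexCategory.mk (am - a0),
    SimplexCategory.Hom.mk ⟨fun i => ⟨(a.toOrderHom i : ℕ) - a0, ?_⟩, ?_⟩,
    SimplexCategory.Hom.mk ⟨fun j => ⟨a0 + j, ?_⟩, ?_⟩, ?_, ?_, ?_, ?_⟩
  · exact Nat.lt_succ_of_le (Nat.sub_le_sub_right (hle i) a0)
  · intro i j hij
    exact Nat.sub_le_sub_right (a.toOrderHom.monotone hij) a0
  · have := Nat.lt_succ_iff.mp j.isLt
    simp only [SimplexCategory.len_mk] at this
    omega
  · intro i j hij
    exact Nat.add_le_add_left hij a0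
  · constructor
    · ext; erw [OrderHom.coe_mk]; simp [← ha0]
    · ext
      simp only [SimplexCategory.len_mk, Fin.last, SimplexCategory.Hom.toOrderHom_mk,
        OrderHom.coe_mk]
      rfl
  · intro i
    simp only [SimplexCategory.Hom.toOrderHom_mk, OrderHom.coe_mk, Fin.val_succ,
      Fin.coe_castSucc]
    change a0 + ((i:ℕ) + 1) = a0 + (i:ℕ) + 1
    omega
  · ext i : 3
    simp only [SimplexCategory.comp_toOrderHom, OrderHom.comp_coe, Function.comp_apply]
    have := hmono i
    ext
    simp only [SimplexCategory.Hom.toOrderHom_mk, OrderHom.coe_mk]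
    change a0 + ((a.toOrderHom i : ℕ) - a0) = (a.toOrderHom i : ℕ)
    omega
  · intro k' g' f' hg' hf' hcomp
    have happ : ∀ i : Fin (m.len + 1),
        (f'.toOrderHom (g'.toOrderHom i) : ℕ) = (a.toOrderHom i : ℕ) := by
      intro i
      rw [← hcomp]
      rfl
    have hf0 : (f'.toOrderHom 0 : ℕ) = a0 := by
      have := happ 0
      rw [hg'.1] at this
      exact this
    have hflast : (f'.toOrderHom (Fin.last k'.len) : ℕ) = am := by
      have := happ (Fin.last m.len)
      rw [hg'.2] at this
      exact this
    have hklen : k'.len = am - a0 := by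
      have := free_apply f' hf' (Fin.last k'.len)
      rw [hflast, hf0] at this
      simp only [Fin.val_last] at this
      omega
    have hk : k' = SimplexCategory.mk (am - a0) := by
      rw [← hklen]
    subst hk
    refine ⟨rfl, heq_of_eq ?_, heq_of_eq ?_⟩
    · ext i : 3
      have h1 := happ i
      have h2 := free_apply f' hf' (g'.toOrderHom i)
      ext
      simp only [SimplexCategory.Hom.toOrderHom_mk, OrderHom.coe_mk]
      rw [hf0] at h2
      change (g'.toOrderHom i : ℕ) = (a.toOrderHom i : ℕ) - a0
      omega
    · ext j : 3
      have h2 := free_apply f' hf' j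
      ext
      simp only [SimplexCategory.Hom.toOrderHom_mk, OrderHom.coe_mk]
      rw [hf0] at h2
      omega


end DS3
end

section
/- Generic and free maps in Δ admit pushouts along each other, and the resulting maps are again generic and free: for any generic map g : [m] → [n] and any free map f : [m] → [k] in Δ, the pushout of g along f exists in Δ, the induced map out of [k] is generic, and the induced map out of [n] is free. -/
/-!
STATEMENT 1: Generic and free maps in Δ admit pushouts along each other, and the
resulting maps are again generic and free.
-/

open CategoryTheory

namespace DS3

lemma homext' {x y : SimplexCategory} {p q : x ⟶ y}
    (h : ∀ i, (p.toOrderHom i : ℕ) = (q.toOrderHom i : ℕ)) : p = q :=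
  SimplexCategory.Hom.ext _ _ (OrderHom.ext _ _ (funext fun i => Fin.ext (h i)))

lemma compval' {x y z : SimplexCategory} (p : x ⟶ y) (q : y ⟶ z) (i : Fin (x.len + 1)) :
    (p ≫ q).toOrderHom i = q.toOrderHom (p.toOrderHom i) := by
  rw [SimplexCategory.comp_toOrderHom]; rfl

set_option maxHeartbeats 1600000 in
/-- For a generic map `g : [m] → [n]` and a free map `f : [m] → [k]`, the pushout of `g`
along `f` exists in `Δ`; the induced map out of `[k]` is generic and the induced map out
of `[n]` is free. -/
theorem generic_free_pushout {m n k : SimplexCategory} (g : m ⟶ n) (f : m ⟶ k)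
    (hg : IsGeneric g) (hf : IsFree f) :
    ∃ (p : SimplexCategory) (f' : n ⟶ p) (g' : k ⟶ p),
      IsFree f' ∧ IsGeneric g' ∧ IsPushout g f f' g' := by
  obtain ⟨hg0, hgl⟩ := hg
  set a : ℕ := (f.toOrderHom 0 : ℕ) with ha
  -- values of the free map f
  have hfval : ∀ i : Fin (m.len + 1), (f.toOrderHom i : ℕ) = a + i := by
    intro i
    induction i using Fin.induction with
    | zero => simp [ha]
    | succ i ih =>
      rw [hf i, ih]
      simp only [Fin.val_succ, Fin.coe_castSucc]
      omega
  have ham : a + m.len ≤ k.len := by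
    have h1 := hfval (Fin.last m.len)
    have h2 := (f.toOrderHom (Fin.last m.len)).is_le
    simp only [Fin.val_last] at h1
    omega
  obtain ⟨b, hk⟩ : ∃ b, k.len = a + m.len + b := ⟨k.len - (a + m.len), by omega⟩
  -- ℕ-valued version of g, clamped
  set gv : ℕ → ℕ := fun t => (g.toOrderHom ⟨min t m.len, by omega⟩ : ℕ) with hgv
  have hgv_mono : Monotone gv := by
    intro t t' htt
    exact g.toOrderHom.monotone (by simp only [Fin.mk_le_mk]; omega)
  have hgv_le : ∀ t, gv t ≤ n.len := fun t => (g.toOrderHom _).is_le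
  have hgv0 : gv 0 = 0 := by
    have : (⟨min 0 m.len, by omega⟩ : Fin (m.len + 1)) = 0 := by
      apply Fin.ext; simp
    rw [hgv]; simp only [this, hg0]; rfl
  have hgvm : gv m.len = n.len := by
    have : (⟨min m.len m.len, by omega⟩ : Fin (m.len + 1)) = Fin.last m.len := by
      apply Fin.ext; simp [Fin.last]
    rw [hgv]; simp only [this, hgl]; rfl
  have hgvval : ∀ i : Fin (m.len + 1), gv i = (g.toOrderHom i : ℕ) := by
    intro i
    have : (⟨min (i : ℕ) m.len, by omega⟩ : Fin (m.len + 1)) = i := by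
      apply Fin.ext; have := i.is_le; simp; omega
    rw [hgv]; simp only [this]
  -- the ℕ-valued pushout comparison map out of k
  set G : ℕ → ℕ := fun x =>
    if x ≤ a + m.len then min x a + gv (x - a) else a + n.len + (x - (a + m.len)) with hG
  have hG1 : ∀ x, x ≤ a → G x = x := by
    intro x hx
    rw [hG]
    simp only [if_pos (by omega : x ≤ a + m.len)]
    have : x - a = 0 := by omega
    rw [this, hgv0]; omega
  have hG2 : ∀ x, a ≤ x → x ≤ a + m.len → G x = a + gv (x - a) := by
    intro x hx hx'
    rw [hG]; simp only [if_pos hx']; omega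
  have hG3 : ∀ x, a + m.len < x → G x = a + n.len + (x - (a + m.len)) := by
    intro x hx
    rw [hG]; simp only [if_neg (by omega : ¬ x ≤ a + m.len)]
  have hG_mono : Monotone G := by
    intro x y hxy
    rw [hG]
    by_cases hx : x ≤ a + m.len
    · by_cases hy : y ≤ a + m.len
      · simp only [if_pos hx, if_pos hy]
        have := hgv_mono (show x - a ≤ y - a by omega)
        omega
      · simp only [if_pos hx, if_neg hy]
        have h1 := hgv_le (x - a)
        omega
    · have hy : ¬ y ≤ a + m.len := by omega
      simp only [if_neg hx, if_neg hy]
      omega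
  have hG_le : ∀ x, x ≤ k.len → G x ≤ a + n.len + b := by
    intro x hx
    rw [hG]
    by_cases hx' : x ≤ a + m.len
    · simp only [if_pos hx']
      have := hgv_le (x - a)
      omega
    · simp only [if_neg hx']
      omega
  -- the pushout object and maps
  set P : SimplexCategory := SimplexCategory.mk (a + n.len + b) with hP
  set f' : n ⟶ P := SimplexCategory.Hom.mk
    ⟨fun j => ⟨a + j, by have := j.is_le; simp [hP, SimplexCategory.len_mk]; omega⟩,
      fun j j' hj => by simp only [Fin.mk_le_mk]; exact Nat.add_le_add_left hj a⟩ with hf'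
  set g' : k ⟶ P := SimplexCategory.Hom.mk
    ⟨fun x => ⟨G x, by have := hG_le x (by exact x.is_le); simp [hP, SimplexCategory.len_mk]; omega⟩,
      fun x x' hx => hG_mono hx⟩ with hg'
  have hf'val : ∀ j : Fin (n.len + 1), (f'.toOrderHom j : ℕ) = a + j := by
    intro j; rw [hf', SimplexCategory.Hom.toOrderHom_mk]; rfl
  have hg'val : ∀ x : Fin (k.len + 1), (g'.toOrderHom x : ℕ) = G x := by
    intro x; rw [hg', SimplexCategory.Hom.toOrderHom_mk]; rfl
  have hPlen : P.len = a + n.len + b := rfl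
  -- f' is free
  have hf'free : IsFree f' := by
    intro i
    rw [hf'val, hf'val]
    simp only [Fin.val_succ, Fin.coe_castSucc]
    omega
  -- g' is generic
  have hg'gen : IsGeneric g' := by
    constructor
    · apply Fin.ext
      rw [hg'val]
      have : ((0 : Fin (k.len + 1)) : ℕ) = 0 := rfl
      rw [this, hG1 0 (by omega)]
      rfl
    · apply Fin.ext
      rw [hg'val]
      simp only [Fin.val_last]
      rw [hPlen]
      by_cases hb : b = 0
      · subst hb
        rw [hG2 k.len (by omega) (by omega), (by omega : k.len - a = m.len), hgvm]
        omega
      · rw [hG3 k.len (by omega)]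
        omega
  -- the square commutes
  have w : g ≫ f' = f ≫ g' := by
    apply homext'
    intro i
    rw [compval', compval', hf'val, hg'val, hfval i]
    rw [hG2 (a + i) (by omega) (by have := i.is_le; omega)]
    rw [(by omega : a + (i : ℕ) - a = (i : ℕ)), hgvval]
  refine ⟨P, f', g', hf'free, hg'gen, ?_⟩
  apply IsPushout.of_isColimit (c := Limits.PushoutCocone.mk f' g' w)
  apply Limits.PushoutCocone.isColimitAux'
  intro s
  set u : n ⟶ s.pt := s.inl with hu
  set v : k ⟶ s.pt := s.inr with hv
  set uv : ℕ → ℕ := fun t => (u.toOrderHom ⟨min t n.len, by omega⟩ : ℕ) with huv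
  set vv : ℕ → ℕ := fun t => (v.toOrderHom ⟨min t k.len, by omega⟩ : ℕ) with hvv
  have huv_mono : Monotone uv := fun t t' htt =>
    u.toOrderHom.monotone (by simp only [Fin.mk_le_mk]; omega)
  have hvv_mono : Monotone vv := fun t t' htt =>
    v.toOrderHom.monotone (by simp only [Fin.mk_le_mk]; omega)
  have huv_le : ∀ t, uv t ≤ s.pt.len := fun t => (u.toOrderHom _).is_le
  have hvv_le : ∀ t, vv t ≤ s.pt.len := fun t => (v.toOrderHom _).is_le
  have huvval : ∀ j : Fin (n.len + 1), uv j = (u.toOrderHom j : ℕ) := by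
    intro j
    have : (⟨min (j : ℕ) n.len, by omega⟩ : Fin (n.len + 1)) = j := by
      apply Fin.ext; have := j.is_le; simp; omega
    rw [huv]; simp only [this]
  have hvvval : ∀ x : Fin (k.len + 1), vv x = (v.toOrderHom x : ℕ) := by
    intro x
    have : (⟨min (x : ℕ) k.len, by omega⟩ : Fin (k.len + 1)) = x := by
      apply Fin.ext; have := x.is_le; simp; omega
    rw [hvv]; simp only [this]
  have hcond : ∀ i : Fin (m.len + 1),
      (u.toOrderHom (g.toOrderHom i) : ℕ) = (v.toOrderHom (f.toOrderHom i) : ℕ) := by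
    intro i
    have hc := s.condition
    have := congrArg (fun q => ((SimplexCategory.Hom.toOrderHom q) i : ℕ)) hc
    simpa only [compval'] using this
  have hwv : ∀ t, t ≤ m.len → uv (gv t) = vv (a + t) := by
    intro t ht
    set i : Fin (m.len + 1) := ⟨t, by omega⟩ with hi
    have h1 : gv t = (g.toOrderHom i : ℕ) := by rw [← hgvval i]
    have h2 : a + t = ((f.toOrderHom i) : ℕ) := by rw [hfval i]
    rw [h1, h2, huvval, hvvval, hcond i]
  have key0 : vv a = uv 0 := by
    have := hwv 0 (by omega)
    rw [hgv0] at this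
    simpa using this.symm
  have keyl : vv (a + m.len) = uv n.len := by
    have := hwv m.len (by omega)
    rw [hgvm] at this
    exact this.symm
  -- the descent map, ℕ-valued
  set Hv : ℕ → ℕ := fun y =>
    if y < a then vv y else if y ≤ a + n.len then uv (y - a) else vv (y - n.len + m.len)
    with hHv
  have hHv1 : ∀ y, y < a → Hv y = vv y := by
    intro y hy; rw [hHv]; simp only [if_pos hy]
  have hHv2 : ∀ y, a ≤ y → y ≤ a + n.len → Hv y = uv (y - a) := by
    intro y hy hy'
    rw [hHv]; simp only [if_neg (by omega : ¬ y < a), if_pos hy']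
  have hHv3 : ∀ y, a + n.len < y → Hv y = vv (y - n.len + m.len) := by
    intro y hy
    rw [hHv]; simp only [if_neg (by omega : ¬ y < a), if_neg (by omega : ¬ y ≤ a + n.len)]
  have hHv_mono : Monotone Hv := by
    intro y y' hyy
    by_cases h1 : y < a
    · by_cases h2 : y' < a
      · rw [hHv1 y h1, hHv1 y' h2]; exact hvv_mono hyy
      · by_cases h3 : y' ≤ a + n.len
        · rw [hHv1 y h1, hHv2 y' (by omega) h3]
          calc vv y ≤ vv a := hvv_mono (by omega)
            _ = uv 0 := key0
            _ ≤ uv (y' - a) := huv_mono (by omega)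
        · rw [hHv1 y h1, hHv3 y' (by omega)]
          exact hvv_mono (by omega)
    · by_cases h2 : y ≤ a + n.len
      · by_cases h3 : y' ≤ a + n.len
        · rw [hHv2 y (by omega) h2, hHv2 y' (by omega) h3]
          exact huv_mono (by omega)
        · rw [hHv2 y (by omega) h2, hHv3 y' (by omega)]
          calc uv (y - a) ≤ uv n.len := huv_mono (by omega)
            _ = vv (a + m.len) := keyl.symm
            _ ≤ vv (y' - n.len + m.len) := hvv_mono (by omega)
      · rw [hHv3 y (by omega), hHv3 y' (by omega)]
        exact hvv_mono (by omega)
  have hHv_le : ∀ y, Hv y ≤ s.pt.len := by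
    intro y
    rw [hHv]
    by_cases h1 : y < a
    · simp only [if_pos h1]; exact hvv_le y
    · by_cases h2 : y ≤ a + n.len
      · simp only [if_neg h1, if_pos h2]; exact huv_le _
      · simp only [if_neg h1, if_neg h2]; exact hvv_le _
  set l : P ⟶ s.pt := SimplexCategory.Hom.mk
    ⟨fun y => ⟨Hv y, by have := hHv_le (y : ℕ); omega⟩,
      fun y y' hy => hHv_mono hy⟩ with hl
  have hlval : ∀ y : Fin (P.len + 1), (l.toOrderHom y : ℕ) = Hv y := by
    intro y; rw [hl, SimplexCategory.Hom.toOrderHom_mk]; rfl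
  have fac1 : f' ≫ l = u := by
    apply homext'
    intro j
    rw [compval', hlval, hf'val]
    rw [hHv2 (a + j) (by omega) (by have := j.is_le; omega)]
    rw [(by omega : a + (j : ℕ) - a = (j : ℕ)), huvval]
  have fac2 : g' ≫ l = v := by
    apply homext'
    intro x
    rw [compval', hlval, hg'val, ← hvvval]
    by_cases h1 : (x : ℕ) ≤ a
    · rw [hG1 x h1]
      by_cases h2 : (x : ℕ) < a
      · rw [hHv1 x h2]
      · have hxa : (x : ℕ) = a := by omega
        rw [hHv2 x (by omega) (by omega), hxa, (by omega : a - a = 0), ← key0]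
    · by_cases h2 : (x : ℕ) ≤ a + m.len
      · rw [hG2 x (by omega) h2]
        rw [hHv2 (a + gv ((x : ℕ) - a)) (by omega) (by have := hgv_le ((x:ℕ) - a); omega)]
        rw [(by omega : a + gv ((x : ℕ) - a) - a = gv ((x : ℕ) - a))]
        rw [hwv ((x : ℕ) - a) (by omega)]
        rw [(by omega : a + ((x : ℕ) - a) = (x : ℕ))]
      · rw [hG3 x (by omega)]
        rw [hHv3 _ (by omega)]
        congr 1
        omega
  refine ⟨l, ?_, ?_, ?_⟩
  · exact fac1
  · exact fac2
  · intro m' hm1 hm2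
    have hm1' : f' ≫ m' = u := by exact hm1
    have hm2' : g' ≫ m' = v := by exact hm2
    have e1 : f' ≫ m' = f' ≫ l := hm1'.trans fac1.symm
    have e2 : g' ≫ m' = g' ≫ l := hm2'.trans fac2.symm
    apply homext'
    intro y
    have hy : (y : ℕ) ≤ a + n.len + b := y.is_le
    by_cases h1 : a ≤ (y : ℕ) ∧ (y : ℕ) ≤ a + n.len
    · set j : Fin (n.len + 1) := ⟨(y : ℕ) - a, by omega⟩ with hj
      have hfj : f'.toOrderHom j = y := by
        apply Fin.ext; rw [hf'val]; simp [hj]; omega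
      have := congrArg (fun q => ((SimplexCategory.Hom.toOrderHom q) j : ℕ)) e1
      simp only [compval', hfj] at this
      erw [compval', hfj] at this
      exact this
    · have hx : ∃ x : Fin (k.len + 1), g'.toOrderHom x = y := by
        by_cases h2 : (y : ℕ) < a
        · refine ⟨⟨(y : ℕ), by omega⟩, ?_⟩
          apply Fin.ext; rw [hg'val]
          show G (y : ℕ) = (y : ℕ)
          exact hG1 _ (by omega)
        · have h3 : a + n.len < (y : ℕ) := by omega
          refine ⟨⟨(y : ℕ) - n.len + m.len, by omega⟩, ?_⟩
          apply Fin.ext; rw [hg'val]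
          show G ((y : ℕ) - n.len + m.len) = (y : ℕ)
          rw [hG3 _ (by omega)]
          omega
      obtain ⟨x, hgx⟩ := hx
      have := congrArg (fun q => ((SimplexCategory.Hom.toOrderHom q) x : ℕ)) e2
      simp only [compval', hgx] at this
      erw [compval', hgx] at this
      exact this


end DS3
end

section
/- Let (E,F) be a factorisation system on a category D, let D_{x/} denote the coslice category under an object x and D^E_{x/} its full subcategory spanned by the E-morphisms out of x, and let w : D_{x/} → D^E_{x/} denote the functor sending a morphism out of x to its E-factor. Then for any morphism e : x → x' belonging to E, the square formed by the precomposition functors e^! : D_{x'/} → D_{x/} and e^! : D^E_{x'/} → D^E_{x/} together with the functors w commutes up to natural isomorphism, and the induced functor from D_{x'/} to the pseudo-pullback of w : D_{x/} → D^E_{x/} along e^! : D^E_{x'/} → D^E_{x/} is an equivalence of categories. -/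
open CategoryTheory

namespace DS3

universe v u v₁ u₁ v₂ u₂ v₃ u₃ v₄ u₄

variable {D : Type u} [Category.{v} D]

structure FactorisationSystem (D : Type u) [Category.{v} D] where
  E : MorphismProperty D
  F : MorphismProperty D
  E_comp_iso : ∀ {X Y Z : D} (e : X ⟶ Y) (i : Y ⟶ Z), IsIso i → E e → E (e ≫ i)
  E_iso_comp : ∀ {X Y Z : D} (i : X ⟶ Y) (e : Y ⟶ Z), IsIso i → E e → E (i ≫ e)
  F_comp_iso : ∀ {X Y Z : D} (f : X ⟶ Y) (i : Y ⟶ Z), IsIso i → F f → F (f ≫ i)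
  F_iso_comp : ∀ {X Y Z : D} (i : X ⟶ Y) (f : Y ⟶ Z), IsIso i → F f → F (i ≫ f)
  orth : ∀ {A B X Y : D} (e : A ⟶ B) (f : X ⟶ Y), E e → F f →
    ∀ (u : A ⟶ X) (v : B ⟶ Y), u ≫ f = e ≫ v →
      ∃! d : B ⟶ X, e ≫ d = u ∧ d ≫ f = v
  fact : ∀ {X Y : D} (h : X ⟶ Y), ∃ (Z : D) (e : X ⟶ Z) (f : Z ⟶ Y), E e ∧ F f ∧ e ≫ f = h

/-- The left class of a factorisation system is closed under composition. -/
theorem FactorisationSystem.E_comp (fs : FactorisationSystem D) {X Y Z : D}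
    (e1 : X ⟶ Y) (e2 : Y ⟶ Z) (h1 : fs.E e1) (h2 : fs.E e2) : fs.E (e1 ≫ e2) := by
  obtain ⟨W, e, f, he, hf, hef⟩ := fs.fact (e1 ≫ e2)
  obtain ⟨d1, ⟨hd1a, hd1b⟩, -⟩ := fs.orth e1 f h1 hf e e2 (by rw [hef])
  obtain ⟨d2, ⟨hd2a, hd2b⟩, -⟩ := fs.orth e2 f h2 hf d1 (𝟙 Z)
    (by rw [hd1b, Category.comp_id])
  obtain ⟨d, hd, huniq⟩ := fs.orth e f he hf e f rfl
  have key1 : e ≫ (f ≫ d2) = e ∧ (f ≫ d2) ≫ f = f := by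
    constructor
    · rw [← Category.assoc, hef, Category.assoc, hd2a, hd1a]
    · rw [Category.assoc, hd2b, Category.comp_id]
  have key2 : e ≫ 𝟙 W = e ∧ 𝟙 W ≫ f = f := ⟨Category.comp_id e, Category.id_comp f⟩
  have hfd2 : f ≫ d2 = 𝟙 W := by rw [huniq _ key1, huniq _ key2]
  have hiso : IsIso f := ⟨d2, hfd2, hd2b⟩
  have := fs.E_comp_iso e f hiso he
  rwa [hef] at this

/-- The full subcategory `D^E_{x/}` of the coslice `D_{x/}` spanned by the `E`-morphisms
out of `x`. -/
abbrev UnderE (fs : FactorisationSystem D) (x : D) :=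
  ObjectProperty.FullSubcategory (fun a : Under x => fs.E a.hom)

/-- The inclusion `D^E_{x/} ↪ D_{x/}`. -/
abbrev inclUE (fs : FactorisationSystem D) (x : D) : UnderE fs x ⥤ Under x :=
  ObjectProperty.ι _

/-- Precomposition with an `E`-map `e : x ⟶ x'`, restricted to the `E`-coslices. -/
def precompE (fs : FactorisationSystem D) {x x' : D} (e : x ⟶ x') (he : fs.E e) :
    UnderE fs x' ⥤ UnderE fs x :=
  ObjectProperty.lift _ (ObjectProperty.ι _ ⋙ Under.map e)
    (fun a => by
      show fs.E (e ≫ a.obj.hom)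
      exact fs.E_comp e a.obj.hom he a.property)

/-- The pseudo-pullback (iso-comma category) of two functors. -/
abbrev PsPull {A : Type u₁} [Category.{v₁} A] {B : Type u₂} [Category.{v₂} B]
    {C : Type u₃} [Category.{v₃} C] (F : A ⥤ C) (G : B ⥤ C) :=
  ObjectProperty.FullSubcategory (fun z : Comma F G => IsIso z.hom)

/-- The functor into the pseudo-pullback induced by a square commuting up to natural
isomorphism. -/
def pbInduced {A : Type u₁} [Category.{v₁} A] {B : Type u₂} [Category.{v₂} B]
    {C : Type u₃} [Category.{v₃} C] {Z : Type u₄} [Category.{v₄} Z]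
    (F : A ⥤ C) (G : B ⥤ C) (H : Z ⥤ A) (K : Z ⥤ B)
    (η : H ⋙ F ≅ K ⋙ G) : Z ⥤ PsPull F G :=
  ObjectProperty.lift _
    { obj := fun z => { left := H.obj z, right := K.obj z, hom := η.hom.app z }
      map := fun {z z'} ζ =>
        { left := H.map ζ, right := K.map ζ, w := by simpa using η.hom.naturality ζ } }
    (fun z => by dsimp; infer_instance)

/-! ### Auxiliary lemmas for the proof of `coslice_coreflection_pullback`. -/

/-- Uniqueness of diagonal fillers. -/
theorem FactorisationSystem.diag_uniq (fs : FactorisationSystem D) {A B X Y : D}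
    {e : A ⟶ B} {f : X ⟶ Y} (he : fs.E e) (hf : fs.F f) {u : A ⟶ X} {v : B ⟶ Y}
    {t₁ t₂ : B ⟶ X} (h₁a : e ≫ t₁ = u) (h₁b : t₁ ≫ f = v)
    (h₂a : e ≫ t₂ = u) (h₂b : t₂ ≫ f = v) : t₁ = t₂ := by
  have h := fs.orth e f he hf u v (by rw [← h₁a, ← h₁b, Category.assoc])
  exact h.unique ⟨h₁a, h₁b⟩ ⟨h₂a, h₂b⟩

/-- Comparison of two `(E,F)`-factorisations of the same morphism: there is a
(necessarily unique) isomorphism of factorisations. -/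
theorem FactorisationSystem.factIso (fs : FactorisationSystem D) {X Y Z₁ Z₂ : D}
    {e₁ : X ⟶ Z₁} {f₁ : Z₁ ⟶ Y} {e₂ : X ⟶ Z₂} {f₂ : Z₂ ⟶ Y}
    (he₁ : fs.E e₁) (hf₁ : fs.F f₁) (he₂ : fs.E e₂) (hf₂ : fs.F f₂)
    (h : e₁ ≫ f₁ = e₂ ≫ f₂) :
    ∃ d : Z₁ ⟶ Z₂, IsIso d ∧ e₁ ≫ d = e₂ ∧ d ≫ f₂ = f₁ := by
  obtain ⟨d, ⟨hd1, hd2⟩, -⟩ := fs.orth e₁ f₂ he₁ hf₂ e₂ f₁ h.symm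
  obtain ⟨d', ⟨hd1', hd2'⟩, -⟩ := fs.orth e₂ f₁ he₂ hf₁ e₁ f₂ h
  refine ⟨d, ⟨d', ?_, ?_⟩, hd1, hd2⟩
  · exact fs.diag_uniq he₁ hf₁ (u := e₁) (v := f₁)
      (by rw [← Category.assoc, hd1, hd1']) (by rw [Category.assoc, hd2', hd2])
      (Category.comp_id e₁) (Category.id_comp f₁)
  · exact fs.diag_uniq he₂ hf₂ (u := e₂) (v := f₂)
      (by rw [← Category.assoc, hd1', hd1]) (by rw [Category.assoc, hd2, hd2'])
      (Category.comp_id e₂) (Category.id_comp f₂)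

/-- An isomorphism in a full subcategory from an isomorphism of underlying objects. -/
def fsIsoMk {C : Type u₁} [Category.{v₁} C] {P : C → Prop} {A B : ObjectProperty.FullSubcategory P}
    (i : A.obj ≅ B.obj) : A ≅ B where
  hom := ObjectProperty.homMk i.hom
  inv := ObjectProperty.homMk i.inv
  hom_inv_id := ObjectProperty.hom_ext _ i.hom_inv_id
  inv_hom_id := ObjectProperty.hom_ext _ i.inv_hom_id

section Helpers

variable {x : D} {P : Under x → Prop}

/-- Extensionality for morphisms in a full subcategory of a coslice. -/
theorem ue_ext {A B : ObjectProperty.FullSubcategory P} {f g : A ⟶ B}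
    (h : CommaMorphism.right f.hom = CommaMorphism.right g.hom) :
    f = g :=
  ObjectProperty.hom_ext _ (Under.UnderMorphism.ext h)

theorem ue_comp_right {A B C : ObjectProperty.FullSubcategory P} (f : A ⟶ B) (g : B ⟶ C) :
    CommaMorphism.right (f ≫ g : A ⟶ C).hom =
      CommaMorphism.right f.hom ≫ CommaMorphism.right g.hom :=
  rfl

theorem ue_w {A B : ObjectProperty.FullSubcategory P} (f : A ⟶ B) :
    A.obj.hom ≫ CommaMorphism.right f.hom = B.obj.hom :=
  Under.w f.hom


/-- Naturality of the counit of a coreflection onto a full subcategory of a coslice,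
on right components. -/
theorem counit_nat_right {w : Under x ⥤ ObjectProperty.FullSubcategory P}
    (adj : ObjectProperty.ι P ⊣ w) {A B : Under x} (l : A ⟶ B) :
    CommaMorphism.right (w.map l).hom ≫
      (adj.counit.app B).right = (adj.counit.app A).right ≫ l.right := by
  have h := adj.counit.naturality l
  exact congrArg CommaMorphism.right h

theorem counit_w {w : Under x ⥤ ObjectProperty.FullSubcategory P}
    (adj : ObjectProperty.ι P ⊣ w) (a : Under x) :
    (w.obj a).obj.hom ≫ (adj.counit.app a).right = a.hom :=
  Under.w (adj.counit.app a)

end Helpers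

/-- Lemma 2.6 ("Lemma `lem:Dx'Dx`"): for an `E`-map `e : x ⟶ x'`, the square formed by the
precomposition functors `e^!` and the `E`-factor coreflections `w` commutes up to natural
isomorphism, and the induced functor from `D_{x'/}` to the pseudo-pullback is an
equivalence.  Here "`w` is the `E`-factor functor" is expressed by saying that `w` is right
adjoint to the inclusion and the counit components are squares whose underlying morphism
lies in `F`. -/
theorem coslice_coreflection_pullback (fs : FactorisationSystem D) {x x' : D}
    (e : x ⟶ x') (he : fs.E e)
    (wx : Under x ⥤ UnderE fs x) (adjx : inclUE fs x ⊣ wx)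
    (hwx : ∀ a : Under x, fs.F (CommaMorphism.right (adjx.counit.app a)))
    (wx' : Under x' ⥤ UnderE fs x') (adjx' : inclUE fs x' ⊣ wx')
    (hwx' : ∀ a : Under x', fs.F (CommaMorphism.right (adjx'.counit.app a))) :
    ∃ η : Under.map e ⋙ wx ≅ wx' ⋙ precompE fs e he,
      (pbInduced wx (precompE fs e he) (Under.map e) wx' η).IsEquivalence := by
  classical
  have hfacL : ∀ a : Under x',
      (wx.obj ((Under.map e).obj a)).obj.hom ≫
        (adjx.counit.app ((Under.map e).obj a)).right = e ≫ a.hom :=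
    fun a => counit_w adjx ((Under.map e).obj a)
  have hfacR : ∀ a : Under x',
      (e ≫ (wx'.obj a).obj.hom) ≫ (adjx'.counit.app a).right = e ≫ a.hom := by
    intro a
    rw [Category.assoc, counit_w adjx' a]
  have hER : ∀ a : Under x', fs.E (e ≫ (wx'.obj a).obj.hom) :=
    fun a => fs.E_comp e _ he (wx'.obj a).property
  -- the comparison maps σ a and their inverses
  choose σ hσiso hσ1 hσ2 using fun a : Under x' =>
    fs.factIso (wx.obj ((Under.map e).obj a)).property (hwx ((Under.map e).obj a))
      (hER a) (hwx' a) ((hfacL a).trans (hfacR a).symm)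
  choose σ' hσ'iso hσ'1 hσ'2 using fun a : Under x' =>
    fs.factIso (hER a) (hwx' a)
      (wx.obj ((Under.map e).obj a)).property (hwx ((Under.map e).obj a))
      ((hfacR a).trans (hfacL a).symm)
  have hσσ' : ∀ a : Under x', σ a ≫ σ' a = 𝟙 _ := fun a =>
    fs.diag_uniq (wx.obj ((Under.map e).obj a)).property (hwx ((Under.map e).obj a))
      (by rw [← Category.assoc, hσ1 a, hσ'1 a]) (by erw [Category.assoc, hσ'2 a, hσ2 a])
      (Category.comp_id _) (Category.id_comp _)
  have hσ'σ : ∀ a : Under x', σ' a ≫ σ a = 𝟙 _ := fun a =>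
    fs.diag_uniq (hER a) (hwx' a)
      (by rw [← Category.assoc, hσ'1 a, hσ1 a]) (by erw [Category.assoc, hσ2 a, hσ'2 a])
      (Category.comp_id _) (Category.id_comp _)
  -- the components of the natural isomorphism
  let comp : ∀ a : Under x',
      (Under.map e ⋙ wx).obj a ≅ (wx' ⋙ precompE fs e he).obj a := fun a =>
    fsIsoMk
      { hom := Under.homMk (σ a) (hσ1 a)
        inv := Under.homMk (σ' a) (hσ'1 a)
        hom_inv_id := Under.UnderMorphism.ext (hσσ' a)
        inv_hom_id := Under.UnderMorphism.ext (hσ'σ a) }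
  have compright : ∀ a : Under x',
      CommaMorphism.right (comp a).hom.hom = σ a :=
    fun a => rfl
  have hnat : ∀ {a b : Under x'} (ζ : a ⟶ b),
      (Under.map e ⋙ wx).map ζ ≫ (comp b).hom =
        (comp a).hom ≫ (wx' ⋙ precompE fs e he).map ζ := by
    intro a b ζ
    apply ue_ext
    rw [ue_comp_right, ue_comp_right, compright, compright]
    have h1 : (wx.obj ((Under.map e).obj a)).obj.hom ≫
        (CommaMorphism.right (wx.map ((Under.map e).map ζ)).hom ≫ σ b)
        = e ≫ (wx'.obj b).obj.hom := by
      rw [← Category.assoc, ue_w (wx.map ((Under.map e).map ζ)), hσ1 b]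
    have h2 : (CommaMorphism.right (wx.map ((Under.map e).map ζ)).hom ≫ σ b)
          ≫ (adjx'.counit.app b).right
        = (adjx.counit.app ((Under.map e).obj a)).right ≫ ζ.right := by
      erw [Category.assoc, hσ2 b, counit_nat_right adjx ((Under.map e).map ζ)]
      rfl
    have h3 : (wx.obj ((Under.map e).obj a)).obj.hom ≫
        (σ a ≫ CommaMorphism.right (wx'.map ζ).hom)
        = e ≫ (wx'.obj b).obj.hom := by
      rw [← Category.assoc, hσ1 a, Category.assoc, ue_w (wx'.map ζ)]
    have h4 : (σ a ≫ CommaMorphism.right (wx'.map ζ).hom)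
          ≫ (adjx'.counit.app b).right
        = (adjx.counit.app ((Under.map e).obj a)).right ≫ ζ.right := by
      erw [Category.assoc, counit_nat_right adjx' ζ, ← Category.assoc, hσ2 a]
      rfl
    exact fs.diag_uniq (wx.obj ((Under.map e).obj a)).property (hwx' b) h1 h2 h3 h4
  refine ⟨NatIso.ofComponents comp hnat, ?_⟩
  set Φ := pbInduced wx (precompE fs e he) (Under.map e) wx' (NatIso.ofComponents comp hnat)
    with hΦ
  -- faithfulness
  haveI hfaith : Φ.Faithful := by
    refine ⟨fun {a b} ζ₁ ζ₂ h => ?_⟩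
    apply Under.UnderMorphism.ext
    exact congrArg (fun g : Φ.obj a ⟶ Φ.obj b =>
      CommaMorphism.right (CommaMorphism.left g.hom)) h
  -- fullness
  haveI hfull : Φ.Full := by
    refine ⟨fun {a b} g => ?_⟩
    have hwD : CommaMorphism.right (wx.map (CommaMorphism.left g.hom)).hom ≫ σ b
        = σ a ≫ CommaMorphism.right (CommaMorphism.right g.hom).hom :=
      congrArg (fun k => CommaMorphism.right k.hom) (CommaMorphism.w g.hom)
    have key : (adjx'.counit.app a).right ≫ (CommaMorphism.left g.hom).right
        = CommaMorphism.right (CommaMorphism.right g.hom).hom ≫ (adjx'.counit.app b).right := by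
      haveI := hσiso a
      erw [← cancel_epi (σ a), ← Category.assoc, ← Category.assoc, hσ2 a, ← hwD,
        ← counit_nat_right adjx (show (Under.map e).obj a ⟶ (Under.map e).obj b from CommaMorphism.left g.hom), Category.assoc, hσ2 b]
      rfl
    have htri : a.hom ≫ (CommaMorphism.left g.hom).right = b.hom := by
      erw [← counit_w adjx' a, Category.assoc, key, ← Category.assoc,
        ue_w (show wx'.obj a ⟶ wx'.obj b from CommaMorphism.right g.hom), counit_w adjx' b]
    refine ⟨Under.homMk (CommaMorphism.left g.hom).right htri, ?_⟩
    apply ObjectProperty.hom_ext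
    apply CommaMorphism.ext
    · apply Under.UnderMorphism.ext
      rfl
    · apply ue_ext
      have hB : CommaMorphism.right (wx'.map (Under.homMk (CommaMorphism.left g.hom).right htri)).hom ≫ (adjx'.counit.app b).right
          = (adjx'.counit.app a).right ≫ (CommaMorphism.left g.hom).right := by
        rw [counit_nat_right adjx' (Under.homMk (CommaMorphism.left g.hom).right htri)]
        rfl
      exact fs.diag_uniq (wx'.obj a).property (hwx' b)
        (ue_w (wx'.map (Under.homMk (CommaMorphism.left g.hom).right htri))) hB
        (ue_w (show wx'.obj a ⟶ wx'.obj b from CommaMorphism.right g.hom)) key.symm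
  -- essential surjectivity
  haveI hess : Φ.EssSurj := by
    refine ⟨fun Z => ?_⟩
    haveI : IsIso Z.obj.hom := Z.property
    -- notation
    have hrr' : CommaMorphism.right Z.obj.hom.hom ≫
        CommaMorphism.right (inv Z.obj.hom).hom = 𝟙 _ :=
      congrArg (fun k => CommaMorphism.right k.hom) (IsIso.hom_inv_id Z.obj.hom)
    have hr'r : CommaMorphism.right (inv Z.obj.hom).hom ≫
        CommaMorphism.right Z.obj.hom.hom = 𝟙 _ :=
      congrArg (fun k => CommaMorphism.right k.hom) (IsIso.inv_hom_id Z.obj.hom)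
    have hφw : (wx.obj Z.obj.left).obj.hom ≫ CommaMorphism.right Z.obj.hom.hom
        = e ≫ Z.obj.right.obj.hom := ue_w Z.obj.hom
    -- in the following, `r`/`r'` denote the underlying inverse isomorphisms of `Z.obj.hom`
    refine
      (fun (r : (wx.obj Z.obj.left).obj.right ⟶ Z.obj.right.obj.right)
           (r' : Z.obj.right.obj.right ⟶ (wx.obj Z.obj.left).obj.right)
           (hrdef : r = CommaMorphism.right Z.obj.hom.hom)
           (hrr'2 : r ≫ r' = 𝟙 _) (hr'r2 : r' ≫ r = 𝟙 _)
           (hφw2 : (wx.obj Z.obj.left).obj.hom ≫ r = e ≫ Z.obj.right.obj.hom) => ?_)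
      _ _ rfl hrr' hr'r hφw
    clear hrr' hr'r hφw
    have hFf₀ : fs.F (r' ≫ (adjx.counit.app Z.obj.left).right) :=
      fs.F_iso_comp r' _ ⟨r, hr'r2, hrr'2⟩ (hwx Z.obj.left)
    -- the candidate object of `Under x'`
    let a' : Under x' :=
      Under.mk (Z.obj.right.obj.hom ≫ (r' ≫ (adjx.counit.app Z.obj.left).right))
    have hea' : e ≫ (Z.obj.right.obj.hom ≫ (r' ≫ (adjx.counit.app Z.obj.left).right))
        = Z.obj.left.hom := by
      rw [← Category.assoc, ← hφw2, Category.assoc,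
        ← Category.assoc r r' ((adjx.counit.app Z.obj.left).right), hrr'2,
        Category.id_comp, counit_w adjx Z.obj.left]
    -- compare the two factorisations of `a'.hom`
    obtain ⟨τ, hτiso, hτ1, hτ2⟩ := fs.factIso (wx'.obj a').property (hwx' a')
      Z.obj.right.property hFf₀ (by rw [counit_w adjx' a']; rfl)
    obtain ⟨τ', hτ'iso, hτ'1, hτ'2⟩ := fs.factIso Z.obj.right.property hFf₀
      (wx'.obj a').property (hwx' a') (by rw [counit_w adjx' a']; rfl)
    have hττ' : τ ≫ τ' = 𝟙 _ := fs.diag_uniq (wx'.obj a').property (hwx' a')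
      (by rw [← Category.assoc, hτ1, hτ'1]) (by rw [Category.assoc, hτ'2, hτ2])
      (Category.comp_id _) (Category.id_comp _)
    have hτ'τ : τ' ≫ τ = 𝟙 _ := fs.diag_uniq Z.obj.right.property hFf₀
      (by rw [← Category.assoc, hτ'1, hτ1]) (by rw [Category.assoc, hτ2, hτ'2])
      (Category.comp_id _) (Category.id_comp _)
    -- the component isomorphisms
    have hlw : (e ≫ (Z.obj.right.obj.hom ≫ (r' ≫ (adjx.counit.app Z.obj.left).right)))
        ≫ 𝟙 Z.obj.left.right = Z.obj.left.hom :=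
      (Category.comp_id _).trans hea'
    let lIso : (Under.map e).obj a' ≅ Z.obj.left :=
      Under.isoMk (Iso.refl Z.obj.left.right) (by exact hlw)
    let rIso : wx'.obj a' ≅ Z.obj.right := fsIsoMk
      { hom := Under.homMk τ hτ1
        inv := Under.homMk τ' hτ'1
        hom_inv_id := Under.UnderMorphism.ext (by simpa using hττ')
        inv_hom_id := Under.UnderMorphism.ext (by simpa using hτ'τ) }
    -- coherence of the square
    have c1a : (wx.obj ((Under.map e).obj a')).obj.hom ≫
        (CommaMorphism.right (wx.map lIso.hom).hom ≫ r)
        = e ≫ Z.obj.right.obj.hom := by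
      rw [← Category.assoc, ue_w (wx.map lIso.hom)]; exact hφw2
    have c1b : (CommaMorphism.right (wx.map lIso.hom).hom ≫ r)
          ≫ (r' ≫ (adjx.counit.app Z.obj.left).right)
        = (adjx.counit.app ((Under.map e).obj a')).right := by
      rw [Category.assoc, ← Category.assoc r r' ((adjx.counit.app Z.obj.left).right),
        hrr'2, Category.id_comp, counit_nat_right adjx lIso.hom]
      exact Category.comp_id _
    have c2a : (wx.obj ((Under.map e).obj a')).obj.hom ≫ (σ a' ≫ τ)
        = e ≫ Z.obj.right.obj.hom := by
      rw [← Category.assoc, hσ1 a', Category.assoc, hτ1]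
    have c2b : (σ a' ≫ τ) ≫ (r' ≫ (adjx.counit.app Z.obj.left).right)
        = (adjx.counit.app ((Under.map e).obj a')).right := by
      erw [Category.assoc, hτ2, hσ2 a']
    refine ⟨a', ⟨fsIsoMk (Comma.isoMk lIso rIso ?_)⟩⟩
    apply ue_ext
    rw [ue_comp_right, ue_comp_right, ← hrdef]
    exact fs.diag_uniq (wx.obj ((Under.map e).obj a')).property hFf₀ c1a c1b c2a c2b
  exact {}

end DS3
end

section
/- Let L : D ⇄ C : R be an adjunction with counit ε, and let (E,F) be a factorisation system on D such that the endofunctor RL sends morphisms of F to morphisms of F, and R(ε_X) belongs to F for every object X of C. Let D̃ ⊆ C be the full subcategory spanned by objects isomorphic to L(A) for A in D, let Ẽ be the class of morphisms of D̃ isomorphic in the arrow category of C to a morphism L(e) with e ∈ E, and let F̃ be the class of morphisms f of D̃ with R(f) ∈ F. Then (Ẽ, F̃) is a factorisation system on D̃. -/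
open CategoryTheory

namespace DS3

universe v u v₂ u₂

variable {D : Type u} [Category.{v} D]

/-- In a factorisation system, the right class is closed under composition. -/
lemma FactorisationSystem.F_comp (fs : FactorisationSystem D) {X Y Z : D}
    (f : X ⟶ Y) (g : Y ⟶ Z) (hf : fs.F f) (hg : fs.F g) : fs.F (f ≫ g) := by
  obtain ⟨M, e, k, he, hk, hek⟩ := fs.fact (f ≫ g)
  -- lift twice to get a retraction d of e
  obtain ⟨d1, ⟨hd11, hd12⟩, -⟩ := fs.orth e g he hg f k (by rw [hek])
  obtain ⟨d, ⟨hd1, hd2⟩, -⟩ := fs.orth e f he hf (𝟙 X) d1 (by simp [hd11])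
  -- show d ≫ e = 𝟙 M using uniqueness of diagonals for the square (e, k)
  obtain ⟨δ, hδ, hδu⟩ := fs.orth e k he hk e k rfl
  have h1 : d ≫ e = 𝟙 M := by
    have hA := hδu (d ≫ e) ⟨by rw [← Category.assoc, hd1, Category.id_comp],
      by rw [Category.assoc, hek, ← Category.assoc, hd2, hd12]⟩
    have hB := hδu (𝟙 M) ⟨Category.comp_id _, Category.id_comp _⟩
    rw [hA, hB]
  have : IsIso e := ⟨d, hd1, h1⟩
  rw [← hek]
  exact fs.F_iso_comp e k this hk

variable {C : Type u₂} [Category.{v₂} C]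

/-- The full subcategory `D̃ ⊆ C` spanned by the objects isomorphic to `L A` for `A` in
`D`. -/
abbrev TildeD (L : D ⥤ C) := ObjectProperty.FullSubcategory (fun X : C => ∃ A : D, Nonempty (L.obj A ≅ X))

/-- The class `Ẽ` of morphisms of `D̃` isomorphic, in the arrow category of `C`, to
a morphism `L e` with `e ∈ E`. -/
def tildeE (L : D ⥤ C) (fs : FactorisationSystem D) : MorphismProperty (TildeD L) :=
  fun {X Y} g =>
    ∃ (A B : D) (e : A ⟶ B), fs.E e ∧
      Nonempty (Arrow.mk (L.map e) ≅ Arrow.mk g.hom)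

/-- The class `F̃` of morphisms `f` of `D̃` with `R f ∈ F`. -/
def tildeF (L : D ⥤ C) (R : C ⥤ D) (fs : FactorisationSystem D) :
    MorphismProperty (TildeD L) :=
  fun {X Y} g => fs.F (R.map g.hom)

lemma isIso_underlying {L : D ⥤ C} {X Y : TildeD L} (i : X ⟶ Y) (h : IsIso i) :
    IsIso i.hom := by
  obtain ⟨j, hj1, hj2⟩ := h.out
  exact ⟨⟨j.hom, congrArg (·.hom) hj1, congrArg (·.hom) hj2⟩⟩

/-- Key orthogonality: `L e` is left orthogonal in `C` to any map whose image under `R`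
is in `F`. -/
lemma key_orth (L : D ⥤ C) (R : C ⥤ D) (adj : L ⊣ R) (fs : FactorisationSystem D)
    {A B : D} {W Z : C} (e : A ⟶ B) (he : fs.E e) (f : W ⟶ Z) (hf : fs.F (R.map f))
    (u : L.obj A ⟶ W) (v : L.obj B ⟶ Z) (sq : u ≫ f = L.map e ≫ v) :
    ∃! d : L.obj B ⟶ W, L.map e ≫ d = u ∧ d ≫ f = v := by
  have sq' : (adj.homEquiv A W u) ≫ R.map f = e ≫ (adj.homEquiv B Z v) := by
    rw [← Adjunction.homEquiv_naturality_right, ← Adjunction.homEquiv_naturality_left, sq]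
  obtain ⟨dh, ⟨hd1, hd2⟩, huniq⟩ := fs.orth e (R.map f) he hf _ _ sq'
  refine ⟨(adj.homEquiv B W).symm dh, ⟨?_, ?_⟩, ?_⟩
  · have := congrArg (adj.homEquiv A W).symm
      (show adj.homEquiv A W (L.map e ≫ (adj.homEquiv B W).symm dh) = adj.homEquiv A W u
        from by rw [Adjunction.homEquiv_naturality_left, Equiv.apply_symm_apply, hd1])
    simpa using this
  · have := congrArg (adj.homEquiv B Z).symm
      (show adj.homEquiv B Z ((adj.homEquiv B W).symm dh ≫ f) = adj.homEquiv B Z v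
        from by rw [Adjunction.homEquiv_naturality_right, Equiv.apply_symm_apply, hd2])
    simpa using this
  · intro d' ⟨h1, h2⟩
    have : adj.homEquiv B W d' = dh := by
      apply huniq
      constructor
      · rw [← Adjunction.homEquiv_naturality_left, h1]
      · rw [← Adjunction.homEquiv_naturality_right, h2]
    rw [← this, Equiv.symm_apply_apply]

/-- Orthogonality of a map isomorphic to some `L e` against a map whose `R`-image is
in `F`, entirely at the level of `C`. -/
lemma orth_lift (L : D ⥤ C) (R : C ⥤ D) (adj : L ⊣ R) (fs : FactorisationSystem D)
    {A B : D} {P Q W Z : C} (et : P ⟶ Q) (f : W ⟶ Z) (e : A ⟶ B) (he : fs.E e)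
    (φ : Arrow.mk (L.map e) ≅ Arrow.mk et) (hf : fs.F (R.map f))
    (u : P ⟶ W) (v : Q ⟶ Z) (sq : u ≫ f = et ≫ v) :
    ∃! d : Q ⟶ W, et ≫ d = u ∧ d ≫ f = v := by
  have wh : φ.hom.left ≫ et = L.map e ≫ φ.hom.right := φ.hom.w
  have wi : φ.inv.left ≫ L.map e = et ≫ φ.inv.right := φ.inv.w
  have hrr : φ.inv.right ≫ φ.hom.right = 𝟙 _ := by
    rw [← Arrow.comp_right, φ.inv_hom_id]; rfl
  have hll : φ.inv.left ≫ φ.hom.left = 𝟙 _ := by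
    rw [← Arrow.comp_left, φ.inv_hom_id]; rfl
  obtain ⟨d0, ⟨hd01, hd02⟩, hd0u⟩ := key_orth L R adj fs e he f hf
    (φ.hom.left ≫ u) (φ.hom.right ≫ v)
    (by rw [Category.assoc, sq, ← Category.assoc, wh, Category.assoc])
  refine ⟨φ.inv.right ≫ d0, ⟨?_, ?_⟩, ?_⟩
  · rw [← Category.assoc, ← wi, Category.assoc, hd01, ← Category.assoc, hll]
    simp
  · rw [Category.assoc, hd02, ← Category.assoc, hrr]
    simp
  · intro d' ⟨h1, h2⟩
    have : φ.hom.right ≫ d' = d0 := by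
      apply hd0u
      exact ⟨by rw [← Category.assoc, ← wh, Category.assoc, h1],
        by rw [Category.assoc, h2]⟩
    rw [← this, ← Category.assoc, hrr]
    simp

/-- Lifting a factorisation system along an adjunction `L ⊣ R`: if `RL` preserves `F` and
`R ε_X ∈ F` for all `X`, then `(Ẽ, F̃)` is a factorisation system on `D̃`. -/
theorem factorisationSystem_lift (L : D ⥤ C) (R : C ⥤ D) (adj : L ⊣ R)
    (fs : FactorisationSystem D)
    (hRL : ∀ {X Y : D} (f : X ⟶ Y), fs.F f → fs.F (R.map (L.map f)))
    (hcounit : ∀ X : C, fs.F (R.map (adj.counit.app X))) :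
    ∃ fs' : FactorisationSystem (TildeD L),
      fs'.E = tildeE L fs ∧ fs'.F = tildeF L R fs := by
  refine ⟨{
    E := tildeE L fs
    F := tildeF L R fs
    E_comp_iso := ?_
    E_iso_comp := ?_
    F_comp_iso := ?_
    F_iso_comp := ?_
    orth := ?_
    fact := ?_ }, rfl, rfl⟩
  · rintro X Y Z g i hi ⟨A, B, e, he, ⟨φ⟩⟩
    have hi' := isIso_underlying i hi
    refine ⟨A, B, e, he, ⟨φ ≪≫ Arrow.isoMk (Iso.refl _)
      (asIso i.hom) (by simp)⟩⟩
  · rintro X Y Z i g hi ⟨A, B, e, he, ⟨φ⟩⟩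
    have hi' := isIso_underlying i hi
    refine ⟨A, B, e, he, ⟨φ ≪≫ Arrow.isoMk (asIso i.hom).symm
      (Iso.refl _) (by simp)⟩⟩
  · rintro X Y Z g i hi hg
    have hi' := isIso_underlying i hi
    show fs.F (R.map (g.hom ≫ i.hom))
    rw [R.map_comp]
    exact fs.F_comp_iso _ _ inferInstance hg
  · rintro X Y Z i g hi hg
    have hi' := isIso_underlying i hi
    show fs.F (R.map (i.hom ≫ g.hom))
    rw [R.map_comp]
    exact fs.F_iso_comp _ _ inferInstance hg
  · rintro P Q X Y et f ⟨A, B, e, he, ⟨φ⟩⟩ hf u v sq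
    obtain ⟨d, ⟨h1, h2⟩, hu⟩ := orth_lift L R adj fs et.hom f.hom
      e he φ hf u.hom v.hom (congrArg (·.hom) sq)
    exact ⟨⟨d⟩, ⟨by ext; exact h1, by ext; exact h2⟩,
      fun d' hd' => by ext; exact hu d'.hom ⟨congrArg (·.hom) hd'.1, congrArg (·.hom) hd'.2⟩⟩
  · rintro X Y g
    obtain ⟨A, ⟨α⟩⟩ := X.property
    obtain ⟨Z0, e0, f0, he0, hf0, hef⟩ :=
      fs.fact (adj.homEquiv A Y.obj (α.hom ≫ g.hom))
    refine ⟨⟨L.obj Z0, Z0, ⟨Iso.refl _⟩⟩,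
      ⟨α.inv ≫ L.map e0⟩,
      ⟨L.map f0 ≫ adj.counit.app Y.obj⟩, ?_, ?_, ?_⟩
    · exact ⟨A, Z0, e0, he0, ⟨Arrow.isoMk α (Iso.refl _) (by simp)⟩⟩
    · show fs.F (R.map (L.map f0 ≫ adj.counit.app Y.obj))
      rw [R.map_comp]
      exact fs.F_comp _ _ (hRL f0 hf0) (hcounit Y.obj)
    · ext
      show (α.inv ≫ L.map e0) ≫ (L.map f0 ≫ adj.counit.app Y.obj)
        = g.hom
      have h : L.map (e0 ≫ f0) ≫ adj.counit.app Y.obj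
          = α.hom ≫ g.hom := by
        have h0 := congrArg (adj.homEquiv A Y.obj).symm hef
        rw [Equiv.symm_apply_apply, Adjunction.homEquiv_counit] at h0
        exact h0
      simp only [Category.assoc, ← L.map_comp_assoc]
      rw [h, ← Category.assoc, α.inv_hom_id, Category.id_comp]


end DS3
end

section
/- Let D be a category with a terminal object 1 and C a category with pullbacks. Then the evaluation functor ev_1 : Fun(D,C) → C is a Grothendieck fibration whose cartesian morphisms are precisely the cartesian natural transformations (those all of whose naturality squares are pullbacks). Consequently, the class of natural transformations whose component at 1 is an isomorphism, together with the class of cartesian natural transformations, form a factorisation system on Fun(D,C). -/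
open CategoryTheory CategoryTheory.Limits

namespace DS3

universe v u v' u' v₂ u₂

/-- A morphism `ψ : c' ⟶ c` is *cartesian* with respect to a functor `p`. -/
def IsCartesianArrow {C : Type u'} [Category.{v'} C] {D' : Type u₂} [Category.{v₂} D']
    (p : C ⥤ D') {c' c : C} (ψ : c' ⟶ c) : Prop :=
  ∀ (c'' : C) (χ : c'' ⟶ c) (g : p.obj c'' ⟶ p.obj c'),
    g ≫ p.map ψ = p.map χ →
    ∃! θ : c'' ⟶ c', θ ≫ ψ = χ ∧ p.map θ = g

/-- A functor `p : C ⥤ D` is a *Grothendieck fibration* if every morphism of `D` with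
codomain in the image of `p` admits a cartesian lift. -/
def IsGrothendieckFibration {C : Type u'} [Category.{v'} C] {D' : Type u₂}
    [Category.{v₂} D'] (p : C ⥤ D') : Prop :=
  ∀ (c : C) (d : D') (f : d ⟶ p.obj c),
    ∃ (c' : C) (ψ : c' ⟶ c) (i : p.obj c' ≅ d),
      i.hom ≫ f = p.map ψ ∧ IsCartesianArrow p ψ

/-- A natural transformation is *cartesian* if all of its naturality squares are
pullbacks. -/
def IsCartesianNT {D : Type u} [Category.{v} D] {C : Type u₂} [Category.{v₂} C]
    {F G : D ⥤ C} (α : F ⟶ G) : Prop :=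
  ∀ ⦃d d' : D⦄ (g : d ⟶ d'),
    IsPullback (α.app d) (F.map g) (G.map g) (α.app d')


section Aux

variable {D : Type u} [Category.{v} D] {C : Type u₂} [Category.{v₂} C]
variable {T : D} (hT : IsTerminal T)

theorem isCartesianNT_comp {F G H : D ⥤ C} {α : F ⟶ G} {β : G ⟶ H}
    (hα : IsCartesianNT α) (hβ : IsCartesianNT β) : IsCartesianNT (α ≫ β) :=
  fun _ _ g => (hα g).paste_horiz (hβ g)

theorem isCartesianNT_of_isIso {F G : D ⥤ C} (α : F ⟶ G) [IsIso α] : IsCartesianNT α :=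
  fun _ _ g => IsPullback.of_horiz_isIso ⟨(α.naturality g).symm⟩

theorem GmapFromT (G : D ⥤ C) : G.map (hT.from T) = 𝟙 _ := by
  rw [hT.hom_ext (hT.from T) (𝟙 T), G.map_id]

include hT in
theorem cartesianArrow_of_NT {F G : D ⥤ C} (α : F ⟶ G) (hα : IsCartesianNT α) :
    IsCartesianArrow ((evaluation D C).obj T) α := by
  intro H χ g hg
  simp only [evaluation_obj_map] at hg
  have w : ∀ b : D, χ.app b ≫ G.map (hT.from b)
      = (H.map (hT.from b) ≫ g) ≫ α.app T := by
    intro b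
    rw [Category.assoc, hg, χ.naturality]
  refine ⟨{ app := fun b => (hα (hT.from b)).lift (χ.app b) (H.map (hT.from b) ≫ g) (w b)
            naturality := ?_ }, ⟨?_, ?_⟩, ?_⟩
  · intro b b' m
    apply (hα (hT.from b')).hom_ext
    · rw [Category.assoc, IsPullback.lift_fst, Category.assoc, α.naturality,
        ← Category.assoc, IsPullback.lift_fst, χ.naturality]
    · rw [Category.assoc, IsPullback.lift_snd, Category.assoc, ← F.map_comp,
        hT.hom_ext (m ≫ hT.from b') (hT.from b), IsPullback.lift_snd,
        ← Category.assoc, ← H.map_comp, hT.hom_ext (m ≫ hT.from b') (hT.from b)]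
  · ext b
    exact (hα (hT.from b)).lift_fst _ _ _
  · simp only [evaluation_obj_map]
    simpa only [GmapFromT hT F, GmapFromT hT H, Category.comp_id, Category.id_comp] using
      (hα (hT.from T)).lift_snd (χ.app T) (H.map (hT.from T) ≫ g) (w T)
  · intro θ' ⟨h1, h2⟩
    simp only [evaluation_obj_map] at h2
    ext b
    apply (hα (hT.from b)).hom_ext
    · rw [IsPullback.lift_fst, ← h1]; rfl
    · rw [IsPullback.lift_snd, ← θ'.naturality, h2]

variable [HasPullbacks C]

noncomputable def liftF (G : D ⥤ C) {c : C} (f : c ⟶ G.obj T) : D ⥤ C where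
  obj d := pullback (G.map (hT.from d)) f
  map {d d'} g := pullback.lift (pullback.fst _ _ ≫ G.map g) (pullback.snd _ _) (by
    rw [Category.assoc, ← G.map_comp, hT.hom_ext (g ≫ hT.from d') (hT.from d),
      pullback.condition])
  map_id d := by apply pullback.hom_ext <;> simp
  map_comp g h := by
    apply pullback.hom_ext
    · simp
      erw [pullback.lift_fst, ← Category.assoc, pullback.lift_fst, Category.assoc]
      erw [pullback.lift_fst_assoc, Category.assoc]
    · simp only [Category.assoc]
      erw [pullback.lift_snd, pullback.lift_snd, pullback.lift_snd]

noncomputable def liftψ (G : D ⥤ C) {c : C} (f : c ⟶ G.obj T) : liftF hT G f ⟶ G where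
  app d := pullback.fst _ _
  naturality {d d'} g := by simp [liftF]; erw [pullback.lift_fst]

theorem liftψ_cartesian (G : D ⥤ C) {c : C} (f : c ⟶ G.obj T) :
    IsCartesianNT (liftψ hT G f) := by
  intro d d' g
  have t : IsPullback (pullback.snd (G.map (hT.from d')) f) (pullback.fst _ _) f
      (G.map (hT.from d')) := (IsPullback.of_hasPullback _ _).flip
  have e1 : (liftF hT G f).map g ≫ pullback.snd (G.map (hT.from d')) f
      = pullback.snd (G.map (hT.from d)) f := by simp [liftF]; erw [pullback.lift_snd]
  have e2 : G.map g ≫ G.map (hT.from d') = G.map (hT.from d) := by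
    rw [← G.map_comp, hT.hom_ext (g ≫ hT.from d') (hT.from d)]
  have s : IsPullback ((liftF hT G f).map g ≫ pullback.snd (G.map (hT.from d')) f)
      (pullback.fst (G.map (hT.from d)) f) f (G.map g ≫ G.map (hT.from d')) := by
    rw [e1, e2]; exact (IsPullback.of_hasPullback _ _).flip
  exact (IsPullback.of_right s (by simp [liftF]; erw [pullback.lift_fst]) t).flip

noncomputable def liftIso (G : D ⥤ C) {c : C} (f : c ⟶ G.obj T) :
    (liftF hT G f).obj T ≅ c where
  hom := pullback.snd _ _
  inv := pullback.lift f (𝟙 c)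
    (by simp only [GmapFromT hT G, Category.comp_id, Category.id_comp])
  hom_inv_id := by
    apply pullback.hom_ext
    · have h := GmapFromT hT G
      erw [Category.assoc, pullback.lift_fst, Category.id_comp, ← pullback.condition]
      simp only [h, Category.comp_id]; rfl
    · erw [Category.assoc, pullback.lift_snd, Category.comp_id, Category.id_comp]
  inv_hom_id := by erw [pullback.lift_snd]

theorem liftIso_hom_f (G : D ⥤ C) {c : C} (f : c ⟶ G.obj T) :
    (liftIso hT G f).hom ≫ f = (liftψ hT G f).app T := by
  have h := GmapFromT hT G
  show pullback.snd _ _ ≫ f = pullback.fst _ _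
  rw [← pullback.condition]
  simp only [h, Category.comp_id]

include hT in
theorem NT_of_cartesianArrow {F G : D ⥤ C} (α : F ⟶ G)
    (h : IsCartesianArrow ((evaluation D C).obj T) α) : IsCartesianNT α := by
  have hψc := liftψ_cartesian hT G (α.app T)
  have hψ := cartesianArrow_of_NT hT _ hψc
  obtain ⟨θ, ⟨hθ1, hθ2⟩, -⟩ := h _ (liftψ hT G (α.app T)) (liftIso hT G (α.app T)).hom
    (by simpa using liftIso_hom_f hT G (α.app T))
  obtain ⟨θ', ⟨hθ'1, hθ'2⟩, -⟩ := hψ _ α (liftIso hT G (α.app T)).inv (by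
    simp only [evaluation_obj_map]
    rw [← liftIso_hom_f hT G (α.app T), Iso.inv_hom_id_assoc])
  have hθ2' : θ.app T = (liftIso hT G (α.app T)).hom := by simpa using hθ2
  have hθ'2' : θ'.app T = (liftIso hT G (α.app T)).inv := by simpa using hθ'2
  have h1 : θ' ≫ θ = 𝟙 F := by
    obtain ⟨z, -, hzu⟩ := h _ α (𝟙 (F.obj T)) (by simp)
    have e1 := hzu (θ' ≫ θ) ⟨by rw [Category.assoc, hθ1, hθ'1],
      by simp [hθ2', hθ'2']⟩
    have e2 := hzu (𝟙 F) ⟨by simp, by simp⟩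
    rw [e1, ← e2]
  have h2 : θ ≫ θ' = 𝟙 (liftF hT G (α.app T)) := by
    obtain ⟨z, -, hzu⟩ := hψ _ (liftψ hT G (α.app T)) (𝟙 _) (by simp)
    have e1 := hzu (θ ≫ θ') ⟨by rw [Category.assoc, hθ'1, hθ1],
      by simp [hθ2', hθ'2']⟩
    have e2 := hzu (𝟙 _) ⟨by simp, by simp⟩
    rw [e1, ← e2]
  haveI : IsIso θ' := ⟨θ, h1, h2⟩
  rw [← hθ'1]
  exact isCartesianNT_comp (isCartesianNT_of_isIso θ') hψc

include hT in
omit [HasPullbacks C] in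
theorem orth_lemma {A B X Y : D ⥤ C} (e : A ⟶ B) (f : X ⟶ Y) (he : IsIso (e.app T))
    (hf : IsCartesianNT f) (u : A ⟶ X) (v : B ⟶ Y) (huv : u ≫ f = e ≫ v) :
    ∃! d : B ⟶ X, e ≫ d = u ∧ d ≫ f = v := by
  haveI := he
  have key : u.app T ≫ f.app T = e.app T ≫ v.app T := by
    have := congrArg (fun γ => γ.app T) huv
    simpa using this
  have hfa := cartesianArrow_of_NT hT f hf
  obtain ⟨d, ⟨hd1, hd2⟩, hdu⟩ := hfa B v (inv (e.app T) ≫ u.app T) (by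
    simp only [evaluation_obj_map]
    rw [Category.assoc, key, IsIso.inv_hom_id_assoc])
  have hd2' : d.app T = inv (e.app T) ≫ u.app T := by simpa using hd2
  obtain ⟨z, -, hzu⟩ := hfa A (u ≫ f) (u.app T) (by simp)
  have e1 := hzu u ⟨rfl, by simp⟩
  have e2 := hzu (e ≫ d) ⟨by rw [Category.assoc, hd1, huv],
    by simp [hd2']⟩
  have heu : e ≫ d = u := by rw [e2, ← e1]
  refine ⟨d, ⟨heu, hd1⟩, ?_⟩
  rintro d' ⟨hd'1, hd'2⟩
  refine hdu d' ⟨hd'2, ?_⟩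
  simp only [evaluation_obj_map]
  have := congrArg (fun γ => γ.app T) hd'1
  simp only [NatTrans.comp_app] at this
  rw [← this, IsIso.inv_hom_id_assoc]

end Aux

/-- For `D` a category with a terminal object `1` and `C` a category with pullbacks, the
evaluation functor `ev₁ : Fun(D,C) ⥤ C` is a Grothendieck fibration, whose cartesian
morphisms are exactly the cartesian natural transformations; consequently the natural
transformations whose component at `1` is invertible, together with the cartesian natural
transformations, form a factorisation system on `Fun(D,C)`. -/
theorem evaluation_fibration_factorisation
    {D : Type u} [Category.{v} D] {C : Type u₂} [Category.{v₂} C]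
    [HasPullbacks C] (T : D) (hT : IsTerminal T) :
    IsGrothendieckFibration ((evaluation D C).obj T) ∧
    (∀ {F G : D ⥤ C} (α : F ⟶ G),
      IsCartesianArrow ((evaluation D C).obj T) α ↔ IsCartesianNT α) ∧
    (∃ fs : FactorisationSystem (D ⥤ C),
      (∀ {F G : D ⥤ C} (α : F ⟶ G), fs.E α ↔ IsIso (α.app T)) ∧
      (∀ {F G : D ⥤ C} (α : F ⟶ G), fs.F α ↔ IsCartesianNT α)) := by
  refine ⟨?_, fun α => ⟨NT_of_cartesianArrow hT α, cartesianArrow_of_NT hT α⟩, ?_⟩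
  · intro G c f
    exact ⟨liftF hT G f, liftψ hT G f, liftIso hT G f,
      by simpa using liftIso_hom_f hT G f,
      cartesianArrow_of_NT hT _ (liftψ_cartesian hT G f)⟩
  · refine ⟨{
      E := fun {P Q} α => IsIso (α.app T)
      F := fun {P Q} α => IsCartesianNT α
      E_comp_iso := ?_
      E_iso_comp := ?_
      F_comp_iso := ?_
      F_iso_comp := ?_
      orth := fun e f he hf u v huv => orth_lemma hT e f he hf u v huv
      fact := ?_ }, fun α => Iff.rfl, fun α => Iff.rfl⟩
    · intro P Q R α i hi hα
      haveI := hi; haveI := hα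
      show IsIso ((α ≫ i).app T)
      rw [NatTrans.comp_app]
      infer_instance
    · intro P Q R i α hi hα
      haveI := hi; haveI := hα
      show IsIso ((i ≫ α).app T)
      rw [NatTrans.comp_app]
      infer_instance
    · intro P Q R α i hi hα
      haveI := hi
      exact isCartesianNT_comp hα (isCartesianNT_of_isIso i)
    · intro P Q R i α hi hα
      haveI := hi
      exact isCartesianNT_comp (isCartesianNT_of_isIso i) hα
    · intro P Q φ
      have hψa := cartesianArrow_of_NT hT _ (liftψ_cartesian hT Q (φ.app T))
      obtain ⟨e, ⟨he1, he2⟩, -⟩ := hψa P φ (liftIso hT Q (φ.app T)).inv (by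
        simp only [evaluation_obj_map]
        rw [← liftIso_hom_f hT Q (φ.app T), Iso.inv_hom_id_assoc])
      refine ⟨liftF hT Q (φ.app T), e, liftψ hT Q (φ.app T), ?_,
        liftψ_cartesian hT Q (φ.app T), he1⟩
      have : e.app T = (liftIso hT Q (φ.app T)).inv := by simpa using he2
      show IsIso (e.app T)
      rw [this]
      infer_instance

end DS3
end

section
/- Let A be a flanked presheaf on Ξ, with face maps d_i : A_n → A_{n−1} (0 ≤ i ≤ n, together with the extra outer face map A_0 → A_{−1}) and degeneracy maps s_j : A_{n−1} → A_n (−1 ≤ j ≤ n, where s_{−1} = s_{⊥−1} and s_n may also be followed by s_{⊤+1} among the outer degeneracies). Then for all n ≥ 0 the following squares are pullbacks of sets: (i) for 0 ≤ i ≤ n, the square with top edge d_i : A_n → A_{n−1}, bottom edge d_{i+1} : A_{n+1} → A_n and both vertical edges s_{⊥−1}; (ii) for −1 ≤ j ≤ n, the square with top edge s_j : A_{n−1} → A_n, bottom edge s_{j+1} : A_n → A_{n+1} and both vertical edges s_{⊥−1}; (iii) for 0 ≤ i ≤ n, the square with top edge d_i : A_n → A_{n−1}, bottom edge d_i : A_{n+1}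 → A_n and both vertical edges s_{⊤+1}; (iv) for −1 ≤ j ≤ n, the square with top edge s_j : A_{n−1} → A_n, bottom edge s_j : A_n → A_{n+1} and both vertical edges s_{⊤+1}. -/
open CategoryTheory Opposite

namespace DS3

/-- A simplicial set is a *decomposition space* if it sends every pushout in `Δ` of a
generic map along a free map to a pullback of sets. -/
def IsDecomposition (X : SimplexCategoryᵒᵖ ⥤ Type) : Prop :=
  ∀ {a b c d : SimplexCategory} (g : a ⟶ b) (f : a ⟶ c) (f' : b ⟶ d) (g' : c ⟶ d),
    IsGeneric g → IsFree f → IsPushout g f f' g' →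
    IsPullback (X.map f'.op) (X.map g'.op) (X.map g.op) (X.map f.op)

/-- A simplicial map is *cULF* if its naturality squares at all generic maps are
pullbacks. -/
def IsCULF {Y X : SimplexCategoryᵒᵖ ⥤ Type} (α : Y ⟶ X) : Prop :=
  ∀ {m n : SimplexCategory} (g : m ⟶ n), IsGeneric g →
    IsPullback (α.app (op n)) (Y.map g.op) (X.map g.op) (α.app (op m))

/-! ## The category Ξ of finite strict intervals -/

/-- Objects of the category `Ξ` of finite strict intervals: `⟨t⟩` stands for the finite
linear order `Fin (t+2)` with (distinct) bottom element `0` and top element `t+1`.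
In the indexing of the paper, `⟨t⟩` is the object `[t-1]`; thus `⟨0⟩ = [-1]`. -/
@[ext] structure IntervalCat : Type where
  /-- the number of non-endpoint elements -/
  len : ℕ

namespace IntervalCat

/-- Morphisms of `Ξ`: order-preserving maps preserving the bottom and the top element. -/
@[ext] structure Hom (a b : IntervalCat) : Type where
  toOrderHom : Fin (a.len + 2) →o Fin (b.len + 2)
  map_bot : toOrderHom 0 = 0
  map_top : toOrderHom (Fin.last (a.len + 1)) = Fin.last (b.len + 1)

instance : Category IntervalCat where
  Hom := Hom
  id a := ⟨OrderHom.id, rfl, rfl⟩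
  comp f g := ⟨g.toOrderHom.comp f.toOrderHom,
    by simp [f.map_bot, g.map_bot], by simp [f.map_top, g.map_top]⟩
  id_comp f := Hom.ext rfl
  comp_id f := Hom.ext rfl
  assoc f g h := Hom.ext rfl

end IntervalCat

/-- The coface map `⟨t⟩ ⟶ ⟨t+1⟩` of `Ξ` skipping the non-endpoint element `i+1`
(for `i ≤ t`; out of this range the index is clamped).  Under a presheaf `A` on `Ξ` it
induces the face map `d_i : A_n → A_{n-1}` (paper indexing `n = t-1`); for `t = i = 0` it is
the extra outer coface `[-1] → [0]`, inducing `A_0 → A_{-1}`. -/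
def xiFace (t i : ℕ) : IntervalCat.mk t ⟶ IntervalCat.mk (t + 1) where
  toOrderHom :=
    { toFun := fun x =>
        ⟨if (x : ℕ) < min (i + 1) (t + 1) then (x : ℕ) else (x : ℕ) + 1, by
          have := x.isLt
          dsimp only at this ⊢
          split <;> omega⟩
      monotone' := by
        intro x y hxy
        have hxy' : (x : ℕ) ≤ (y : ℕ) := hxy
        simp only [Fin.mk_le_mk]
        split <;> split <;> omega }
  map_bot := by
    apply Fin.ext
    simp only [OrderHom.coe_mk, Fin.val_zero]
    first | (split_ifs <;> omega) | simp
  map_top := by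
    apply Fin.ext
    simp only [OrderHom.coe_mk, Fin.val_last]
    split <;> omega

/-- The codegeneracy map `⟨t+1⟩ ⟶ ⟨t⟩` of `Ξ` collapsing the pair `(j, j+1)` onto `j`
(for `j ≤ t+1`; out of this range the index is clamped).  For `j = 0` this is the extra
bottom codegeneracy (inducing `s_{⊥-1} : A_n → A_{n+1}`, paper indexing `n = t-1`), for
`j = t+1` the extra top codegeneracy (inducing `s_{⊤+1}`), and for `1 ≤ j ≤ t` the ordinary
codegeneracy `σ_{j-1}` (inducing `s_{j-1}`). -/
def xiSigma (t j : ℕ) : IntervalCat.mk (t + 1) ⟶ IntervalCat.mk t where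
  toOrderHom :=
    { toFun := fun x =>
        ⟨if (x : ℕ) ≤ min j (t + 1) then (x : ℕ) else (x : ℕ) - 1, by
          have := x.isLt
          dsimp only at this ⊢
          split <;> omega⟩
      monotone' := by
        intro x y hxy
        have hxy' : (x : ℕ) ≤ (y : ℕ) := hxy
        simp only [Fin.mk_le_mk]
        split <;> split <;> omega }
  map_bot := by
    apply Fin.ext
    simp only [OrderHom.coe_mk, Fin.val_zero]
    first | (split_ifs <;> omega) | simp
  map_top := by
    apply Fin.ext
    simp only [OrderHom.coe_mk, Fin.val_last]
    split <;> omega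

/-! ## The functors `u : Ξ ⥤ Δ` and `i : Δ ⥤ Ξ` -/

/-- The forgetful functor `u : Ξ ⥤ Δ`, forgetting that the endpoints are distinguished:
`u ⟨t⟩ = [t+1]`. -/
def uF : IntervalCat ⥤ SimplexCategory where
  obj a := SimplexCategory.mk (a.len + 1)
  map f := SimplexCategory.mkHom f.toOrderHom
  map_id _ := rfl
  map_comp _ _ := rfl

/-- The underlying map of `i f`: extend `f` by a new bottom and a new top element. -/
def iObjMap {m n : ℕ} (f : Fin (m + 1) →o Fin (n + 1)) : Fin (m + 3) →o Fin (n + 3) where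
  toFun x :=
    if (x : ℕ) = 0 then 0
    else if h : m + 2 ≤ (x : ℕ) then Fin.last (n + 2)
    else ⟨(f ⟨(x : ℕ) - 1, by omega⟩ : ℕ) + 1, by
      have := (f ⟨(x : ℕ) - 1, by omega⟩).isLt; omega⟩
  monotone' := by
    intro x y hxy
    have hxy' : (x : ℕ) ≤ (y : ℕ) := hxy
    dsimp only
    by_cases h1 : (x : ℕ) = 0
    · simp only [if_pos h1]
      exact Fin.zero_le _
    · rw [if_neg h1]
      have hy1 : ¬ (y : ℕ) = 0 := by omega
      rw [if_neg hy1]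
      by_cases h2 : m + 2 ≤ (x : ℕ)
      · rw [dif_pos h2, dif_pos (by omega : m + 2 ≤ (y : ℕ))]
      · rw [dif_neg h2]
        by_cases h3 : m + 2 ≤ (y : ℕ)
        · rw [dif_pos h3]
          exact Fin.le_last _
        · rw [dif_neg h3]
          simp only [Fin.mk_le_mk]
          have : (⟨(x : ℕ) - 1, by omega⟩ : Fin (m + 1)) ≤ ⟨(y : ℕ) - 1, by omega⟩ := by
            simp only [Fin.mk_le_mk]; omega
          exact Nat.add_le_add_right (f.monotone this) 1

theorem iObjMap_bot {m n : ℕ} (f : Fin (m + 1) →o Fin (n + 1)) : iObjMap f 0 = 0 := by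
  simp [iObjMap]

theorem iObjMap_top {m n : ℕ} (f : Fin (m + 1) →o Fin (n + 1)) :
    iObjMap f (Fin.last (m + 2)) = Fin.last (n + 2) := by
  simp [iObjMap]

theorem iObjMap_id (m : ℕ) :
    iObjMap (OrderHom.id : Fin (m + 1) →o Fin (m + 1)) = OrderHom.id := by
  apply OrderHom.ext
  funext j
  apply Fin.ext
  have hj := j.isLt
  simp only [iObjMap, OrderHom.coe_mk, OrderHom.id_coe, id_eq]
  split_ifs with h1 h2 <;> simp <;> omega

theorem iObjMap_comp {m p n : ℕ} (f : Fin (m + 1) →o Fin (p + 1))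
    (g : Fin (p + 1) →o Fin (n + 1)) :
    iObjMap (g.comp f) = (iObjMap g).comp (iObjMap f) := by
  apply OrderHom.ext
  funext j
  apply Fin.ext
  have hj := j.isLt
  have key : ∀ {a b : ℕ} (F : Fin (a + 1) →o Fin (b + 1)) (x : Fin (a + 3))
      (hx0 : (x : ℕ) ≠ 0) (hx : ¬ a + 2 ≤ (x : ℕ)),
      ((iObjMap F x : Fin (b + 3)) : ℕ) = (F ⟨(x : ℕ) - 1, by omega⟩ : ℕ) + 1 := by
    intro a b F x hx0 hx
    first
      | (show ((if (x : ℕ) = 0 then (0 : Fin (b + 3))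
            else if h : a + 2 ≤ (x : ℕ) then Fin.last (b + 2)
            else ⟨(F ⟨(x : ℕ) - 1, by omega⟩ : ℕ) + 1, by
              have := (F ⟨(x : ℕ) - 1, by omega⟩).isLt; omega⟩ : Fin (b + 3)) : ℕ) = _
         rw [if_neg hx0, dif_neg hx])
      | simp [iObjMap, hx0, hx]
  change _ = ((iObjMap g (iObjMap f j) : Fin (n + 3)) : ℕ)
  by_cases h1 : (j : ℕ) = 0
  · have : j = 0 := Fin.ext h1
    subst this
    simp only [iObjMap_bot]
  · by_cases h2 : m + 2 ≤ (j : ℕ)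
    · have : j = Fin.last (m + 2) := Fin.ext (by simp only [Fin.val_last]; omega)
      subst this
      simp only [iObjMap_top]
    · have hb := (f ⟨(j : ℕ) - 1, by omega⟩).isLt
      have e : iObjMap f j = ⟨(f ⟨(j : ℕ) - 1, by omega⟩ : ℕ) + 1, by omega⟩ :=
        Fin.ext (key f j h1 h2)
      rw [key (g.comp f) j h1 h2, e,
        key g _ (by simp only [Fin.val_mk]; omega) (by simp only [Fin.val_mk]; omega)]
      simp

/-- The functor `i : Δ ⥤ Ξ` adjoining a new bottom and a new top element:
`i [n] = ⟨n+1⟩`. -/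
def iF : SimplexCategory ⥤ IntervalCat where
  obj x := ⟨x.len + 1⟩
  map f := ⟨iObjMap f.toOrderHom, iObjMap_bot _, iObjMap_top _⟩
  map_id x := IntervalCat.Hom.ext (iObjMap_id x.len)
  map_comp f g := IntervalCat.Hom.ext (iObjMap_comp f.toOrderHom g.toOrderHom)

/-! ## Presheaves on Ξ -/

/-- Restriction of a simplicial set along `u` (the functor `u*`). -/
def uStar (X : SimplexCategoryᵒᵖ ⥤ Type) : IntervalCatᵒᵖ ⥤ Type := uF.op ⋙ X

/-- Restriction of a presheaf on `Ξ` along `i` (the functor `i*`, taking underlying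
simplicial sets). -/
def iStar (A : IntervalCatᵒᵖ ⥤ Type) : SimplexCategoryᵒᵖ ⥤ Type := iF.op ⋙ A

/-- A map of presheaves on `Ξ` is *cartesian* if all its naturality squares are
pullbacks. -/
def IsCartesianXi {A B : IntervalCatᵒᵖ ⥤ Type} (α : A ⟶ B) : Prop :=
  ∀ ⦃c c' : IntervalCatᵒᵖ⦄ (φ : c ⟶ c'),
    IsPullback (α.app c) (A.map φ) (B.map φ) (α.app c')

/-- A presheaf `A` on `Ξ` is *flanked* if the extra outer degeneracy maps form cartesian
squares with the opposite outer face maps: for all `n ≥ 0` the squares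

`A_{n-1} ←d⊤− A_n`         `A_{n-1} ←d⊥− A_n`
`  s⊥↓        ↓s⊥`   and   `  s⊤↓        ↓s⊤`
`A_n  ←d⊤−  A_{n+1}`       `A_n  ←d⊥−  A_{n+1}`

are pullbacks (where `A_n := A(⟨n+1⟩)` in paper degree indexing, `d⊤` is the top face map,
`d⊥` the bottom face map, and for `n = 0` both are the extra outer face map
`A_0 → A_{-1}`). -/
def Flanked (A : IntervalCatᵒᵖ ⥤ Type) : Prop :=
  ∀ n : ℕ,
    IsPullback (A.map (xiFace n n).op) (A.map (xiSigma (n + 1) 0).op)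
      (A.map (xiSigma n 0).op) (A.map (xiFace (n + 1) (n + 1)).op) ∧
    IsPullback (A.map (xiFace n 0).op) (A.map (xiSigma (n + 1) (n + 2)).op)
      (A.map (xiSigma n (n + 1)).op) (A.map (xiFace (n + 1) 0).op)


open Limits

lemma hom_ext_val {a b : IntervalCat} {f g : a ⟶ b}
    (h : ∀ x : Fin (a.len + 2), ((f.toOrderHom x : ℕ)) = (g.toOrderHom x : ℕ)) : f = g := by
  apply IntervalCat.Hom.ext
  apply OrderHom.ext
  funext x
  exact Fin.ext (h x)

lemma comp_toOrderHom {a b c : IntervalCat} (f : a ⟶ b) (g : b ⟶ c) (x : Fin (a.len + 2)) :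
    (f ≫ g).toOrderHom x = g.toOrderHom (f.toOrderHom x) := rfl

lemma xiC1 (n i : ℕ) (h : i ≤ n) :
    xiSigma n 0 ≫ xiFace n i = xiFace (n+1) (i+1) ≫ xiSigma (n+1) 0 := by
  apply hom_ext_val
  intro x
  have hx := x.isLt
  simp only [comp_toOrderHom, xiFace, xiSigma, OrderHom.coe_mk]
  split_ifs <;> omega

lemma xiC2 (n jj : ℕ) (h : jj ≤ n + 1) :
    xiSigma (n+1) 0 ≫ xiSigma n jj = xiSigma (n+1) (jj+1) ≫ xiSigma n 0 := by
  apply hom_ext_val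
  intro x
  have hx := x.isLt
  simp only [comp_toOrderHom, xiSigma, OrderHom.coe_mk]
  split_ifs <;> omega

lemma xiC3 (n i : ℕ) (h : i ≤ n) :
    xiSigma n (n+1) ≫ xiFace n i = xiFace (n+1) i ≫ xiSigma (n+1) (n+2) := by
  apply hom_ext_val
  intro x
  have hx := x.isLt
  simp only [comp_toOrderHom, xiFace, xiSigma, OrderHom.coe_mk]
  split_ifs <;> omega

lemma xiC4 (n jj : ℕ) (h : jj ≤ n + 1) :
    xiSigma (n+1) (n+2) ≫ xiSigma n jj = xiSigma (n+1) jj ≫ xiSigma n (n+1) := by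
  apply hom_ext_val
  intro x
  have hx := x.isLt
  simp only [comp_toOrderHom, xiSigma, OrderHom.coe_mk]
  split_ifs <;> omega

lemma xiS1 (m : ℕ) : xiFace m 0 ≫ xiSigma m 0 = 𝟙 (IntervalCat.mk m) := by
  apply hom_ext_val
  intro x
  have hx := x.isLt
  simp only [comp_toOrderHom, xiFace, xiSigma, OrderHom.coe_mk]
  show _ = (x : ℕ)
  split_ifs <;> omega

lemma xiS2 (m : ℕ) : xiFace m m ≫ xiSigma m (m+1) = 𝟙 (IntervalCat.mk m) := by
  apply hom_ext_val
  intro x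
  have hx := x.isLt
  simp only [comp_toOrderHom, xiFace, xiSigma, OrderHom.coe_mk]
  show _ = (x : ℕ)
  split_ifs <;> omega

lemma xiFlank1 (m : ℕ) :
    xiFace (m+1) (m+1) ≫ xiSigma (m+1) 0 = xiSigma m 0 ≫ xiFace m m := by
  apply hom_ext_val
  intro x
  have hx := x.isLt
  simp only [comp_toOrderHom, xiFace, xiSigma, OrderHom.coe_mk]
  split_ifs <;> omega

lemma xiFlank2 (m : ℕ) :
    xiFace (m+1) 0 ≫ xiSigma (m+1) (m+2) = xiSigma m (m+1) ≫ xiFace m 0 := by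
  apply hom_ext_val
  intro x
  have hx := x.isLt
  simp only [comp_toOrderHom, xiFace, xiSigma, OrderHom.coe_mk]
  split_ifs <;> omega

/-- composite of top cofaces `⟨1⟩ ⟶ ⟨m+1⟩`. -/
def thetaTop : (m : ℕ) → (IntervalCat.mk 1 ⟶ IntervalCat.mk (m+1))
  | 0 => 𝟙 _
  | m+1 => thetaTop m ≫ xiFace (m+1) (m+1)

lemma thetaTop_apply (m : ℕ) (x : Fin 3) :
    ((thetaTop m).toOrderHom x : ℕ) = if (x : ℕ) ≤ 1 then (x : ℕ) else m + 2 := by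
  induction m with
  | zero =>
    show (x : ℕ) = _
    have hx := x.isLt
    split_ifs <;> omega
  | succ m ih =>
    show ((xiFace (m+1) (m+1)).toOrderHom ((thetaTop m).toOrderHom x) : ℕ) = _
    simp only [xiFace, OrderHom.coe_mk]
    rw [ih]
    split_ifs <;> omega

/-- composite of bottom cofaces `⟨1⟩ ⟶ ⟨m+1⟩`. -/
def betaBot : (m : ℕ) → (IntervalCat.mk 1 ⟶ IntervalCat.mk (m+1))
  | 0 => 𝟙 _
  | m+1 => betaBot m ≫ xiFace (m+1) 0

lemma betaBot_apply (m : ℕ) (x : Fin 3) :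
    ((betaBot m).toOrderHom x : ℕ) = if (x : ℕ) = 0 then 0 else (x : ℕ) + m := by
  induction m with
  | zero =>
    show (x : ℕ) = _
    split_ifs <;> omega
  | succ m ih =>
    show ((xiFace (m+1) 0).toOrderHom ((betaBot m).toOrderHom x) : ℕ) = _
    simp only [xiFace, OrderHom.coe_mk]
    rw [ih]
    have hx := x.isLt
    split_ifs <;> omega

lemma xiE1 (n i : ℕ) (h : i ≤ n) :
    thetaTop n ≫ xiFace (n+1) (i+1) = thetaTop (n+1) := by
  apply hom_ext_val
  intro x
  show ((xiFace (n+1) (i+1)).toOrderHom ((thetaTop n).toOrderHom x) : ℕ)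
    = ((xiFace (n+1) (n+1)).toOrderHom ((thetaTop n).toOrderHom x) : ℕ)
  simp only [xiFace, OrderHom.coe_mk]
  rw [thetaTop_apply]
  have hx := x.isLt
  split_ifs <;> omega

lemma xiE2 (n jj : ℕ) (h : jj ≤ n + 1) :
    thetaTop (n+1) ≫ xiSigma (n+1) (jj+1) = thetaTop n := by
  apply hom_ext_val
  intro x
  show ((xiSigma (n+1) (jj+1)).toOrderHom ((thetaTop (n+1)).toOrderHom x) : ℕ) = _
  simp only [xiSigma, OrderHom.coe_mk]
  rw [thetaTop_apply, thetaTop_apply]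
  have hx := x.isLt
  split_ifs <;> omega

lemma xiE3 (n i : ℕ) (h : i ≤ n) :
    betaBot n ≫ xiFace (n+1) i = betaBot (n+1) := by
  apply hom_ext_val
  intro x
  show ((xiFace (n+1) i).toOrderHom ((betaBot n).toOrderHom x) : ℕ)
    = ((xiFace (n+1) 0).toOrderHom ((betaBot n).toOrderHom x) : ℕ)
  simp only [xiFace, OrderHom.coe_mk]
  rw [betaBot_apply]
  have hx := x.isLt
  split_ifs <;> omega

lemma xiE4 (n jj : ℕ) (h : jj ≤ n + 1) :
    betaBot (n+1) ≫ xiSigma (n+1) jj = betaBot n := by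
  apply hom_ext_val
  intro x
  show ((xiSigma (n+1) jj).toOrderHom ((betaBot (n+1)).toOrderHom x) : ℕ) = _
  simp only [xiSigma, OrderHom.coe_mk]
  rw [betaBot_apply, betaBot_apply]
  have hx := x.isLt
  split_ifs <;> omega

lemma isPullback_of_types {P X Y Z : Type} (fst : P ⟶ X) (snd : P ⟶ Y) (f : X ⟶ Z) (g : Y ⟶ Z)
    (comm : ∀ p, f (fst p) = g (snd p)) (hf : Function.Injective f)
    (hsnd : Function.Injective snd) (hr : ∀ y, (∃ x, f x = g y) → ∃ p, snd p = y) :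
    IsPullback fst snd f g := by
  have w : fst ≫ f = snd ≫ g := by ext p; exact comm p
  refine IsPullback.of_isLimit (c := PullbackCone.mk fst snd w) ?_
  refine (PullbackCone.isLimitEquivBijective (PullbackCone.mk fst snd w)).symm ⟨?_, ?_⟩
  · intro p q hpq
    apply hsnd
    exact congrArg (fun t => (t.1.2 : Y)) hpq
  · rintro ⟨⟨x, y⟩, hxy⟩
    obtain ⟨p, hp⟩ := hr y ⟨x, hxy⟩
    have hx : fst p = x := hf (by rw [comm p, hp]; exact hxy.symm)
    exact ⟨p, Subtype.ext (Prod.ext hx hp)⟩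

lemma exists_of_isPullback {P X Y Z : Type} {fst : P ⟶ X} {snd : P ⟶ Y} {f : X ⟶ Z} {g : Y ⟶ Z}
    (h : IsPullback fst snd f g) (x : X) (y : Y) (hxy : f x = g y) :
    ∃ p, fst p = x ∧ snd p = y := by
  obtain ⟨p, hp⟩ := (PullbackCone.isLimitEquivBijective _ h.isLimit).2 ⟨⟨x, y⟩, hxy⟩
  exact ⟨p, congrArg (fun t => (t.1.1 : X)) hp, congrArg (fun t => (t.1.2 : Y)) hp⟩

variable (A : IntervalCatᵒᵖ ⥤ Type)

lemma map_map {a b c : IntervalCat} (u : a ⟶ b) (v : b ⟶ c) (x : A.obj (op c)) :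
    A.map u.op (A.map v.op x) = A.map ((u ≫ v) : a ⟶ c).op x := by
  rw [← types_comp_apply (A.map v.op) (A.map u.op), ← A.map_comp, ← op_comp]

lemma inj_sbot (m : ℕ) : Function.Injective (A.map (xiSigma m 0).op) := by
  have key : ∀ x, A.map (xiFace m 0).op (A.map (xiSigma m 0).op x) = x := by
    intro x
    rw [map_map, xiS1]
    simp
  intro x y hxy
  rw [← key x, ← key y, hxy]

lemma inj_stop (m : ℕ) : Function.Injective (A.map (xiSigma m (m+1)).op) := by
  have key : ∀ x, A.map (xiFace m m).op (A.map (xiSigma m (m+1)).op x) = x := by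
    intro x
    rw [map_map, xiS2]
    simp
  intro x y hxy
  rw [← key x, ← key y, hxy]

lemma chainBot (hA : Flanked A) (m : ℕ) (x : A.obj (op (IntervalCat.mk (m+1)))) :
    (∃ z, A.map (xiSigma m 0).op z = x) ↔
      (∃ z, A.map (xiSigma 0 0).op z = A.map (thetaTop m).op x) := by
  induction m with
  | zero =>
    have : A.map (thetaTop 0).op x = x := by
      show A.map (𝟙 (IntervalCat.mk 1)).op x = x
      simp
    rw [this]
  | succ m ih =>
    have hstep : A.map (thetaTop (m+1)).op x
        = A.map (thetaTop m).op (A.map (xiFace (m+1) (m+1)).op x) := by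
      rw [map_map]; rfl
    constructor
    · rintro ⟨z, rfl⟩
      have hin : A.map (xiFace (m+1) (m+1)).op (A.map (xiSigma (m+1) 0).op z)
          = A.map (xiSigma m 0).op (A.map (xiFace m m).op z) := by
        rw [map_map, xiFlank1, ← map_map]
      rw [hstep, hin]
      exact (ih _).1 ⟨A.map (xiFace m m).op z, rfl⟩
    · rintro hz
      rw [hstep] at hz
      obtain ⟨y, hy⟩ := (ih (A.map (xiFace (m+1) (m+1)).op x)).2 hz
      obtain ⟨p, _, hp2⟩ := exists_of_isPullback (hA m).1 y x hy
      exact ⟨p, hp2⟩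

lemma chainTop (hA : Flanked A) (m : ℕ) (x : A.obj (op (IntervalCat.mk (m+1)))) :
    (∃ z, A.map (xiSigma m (m+1)).op z = x) ↔
      (∃ z, A.map (xiSigma 0 1).op z = A.map (betaBot m).op x) := by
  induction m with
  | zero =>
    have : A.map (betaBot 0).op x = x := by
      show A.map (𝟙 (IntervalCat.mk 1)).op x = x
      simp
    rw [this]
  | succ m ih =>
    have hstep : A.map (betaBot (m+1)).op x
        = A.map (betaBot m).op (A.map (xiFace (m+1) 0).op x) := by
      rw [map_map]; rfl
    constructor
    · rintro ⟨z, rfl⟩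
      have hin : A.map (xiFace (m+1) 0).op (A.map (xiSigma (m+1) (m+2)).op z)
          = A.map (xiSigma m (m+1)).op (A.map (xiFace m 0).op z) := by
        rw [map_map, xiFlank2, ← map_map]
      rw [hstep, hin]
      exact (ih _).1 ⟨A.map (xiFace m 0).op z, rfl⟩
    · rintro hz
      rw [hstep] at hz
      obtain ⟨y, hy⟩ := (ih (A.map (xiFace (m+1) 0).op x)).2 hz
      obtain ⟨p, _, hp2⟩ := exists_of_isPullback (hA m).2 y x hy
      exact ⟨p, hp2⟩

/-- "bonus pullbacks" for flanked presheaves on `Ξ`.  Let `A` be a flanked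
presheaf on `Ξ` (paper degree indexing: `A_n := A(⟨n+1⟩)`, `n ≥ -1`).  Then for all `n ≥ 0`
the following squares are pullbacks:
(i)  top `d_i : A_n → A_{n-1}`, bottom `d_{i+1} : A_{n+1} → A_n`, verticals `s_{⊥-1}`,
     for `0 ≤ i ≤ n`;
(ii) top `s_j : A_{n-1} → A_n`, bottom `s_{j+1} : A_n → A_{n+1}`, verticals `s_{⊥-1}`,
     for `-1 ≤ j ≤ n` (we encode the index as `jj = j + 1`, `0 ≤ jj ≤ n+1`, so that
     `s_j = A(xiSigma n jj)` includes `s_{-1} = s_{⊥-1}` at `jj = 0` and `s_{⊤+1}` at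
     `jj = n+1`);
(iii) top `d_i : A_n → A_{n-1}`, bottom `d_i : A_{n+1} → A_n`, verticals `s_{⊤+1}`,
     for `0 ≤ i ≤ n`;
(iv) top `s_j : A_{n-1} → A_n`, bottom `s_j : A_n → A_{n+1}`, verticals `s_{⊤+1}`,
     for `-1 ≤ j ≤ n` (encoded as in (ii)). -/
theorem flanked_bonus_pullbacks (A : IntervalCatᵒᵖ ⥤ Type) (hA : Flanked A) (n : ℕ) :
    (∀ i ≤ n,
      IsPullback (A.map (xiFace n i).op) (A.map (xiSigma (n + 1) 0).op)
        (A.map (xiSigma n 0).op) (A.map (xiFace (n + 1) (i + 1)).op)) ∧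
    (∀ jj ≤ n + 1,
      IsPullback (A.map (xiSigma n jj).op) (A.map (xiSigma n 0).op)
        (A.map (xiSigma (n + 1) 0).op) (A.map (xiSigma (n + 1) (jj + 1)).op)) ∧
    (∀ i ≤ n,
      IsPullback (A.map (xiFace n i).op) (A.map (xiSigma (n + 1) (n + 2)).op)
        (A.map (xiSigma n (n + 1)).op) (A.map (xiFace (n + 1) i).op)) ∧
    (∀ jj ≤ n + 1,
      IsPullback (A.map (xiSigma n jj).op) (A.map (xiSigma n (n + 1)).op)
        (A.map (xiSigma (n + 1) (n + 2)).op) (A.map (xiSigma (n + 1) jj).op)) := by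
  refine ⟨fun i hi => ?_, fun jj hjj => ?_, fun i hi => ?_, fun jj hjj => ?_⟩
  · apply isPullback_of_types
    · intro p
      rw [map_map, map_map, xiC1 n i hi]
    · exact inj_sbot A n
    · exact inj_sbot A (n+1)
    · intro y hy
      have h1 := (chainBot A hA n (A.map (xiFace (n+1) (i+1)).op y)).1 hy
      rw [map_map, xiE1 n i hi] at h1
      exact (chainBot A hA (n+1) y).2 h1
  · apply isPullback_of_types
    · intro p
      rw [map_map, map_map, xiC2 n jj hjj]
    · exact inj_sbot A (n+1)
    · exact inj_sbot A n
    · intro y hy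
      have h1 := (chainBot A hA (n+1) (A.map (xiSigma (n+1) (jj+1)).op y)).1 hy
      rw [map_map, xiE2 n jj hjj] at h1
      exact (chainBot A hA n y).2 h1
  · apply isPullback_of_types
    · intro p
      rw [map_map, map_map, xiC3 n i hi]
    · exact inj_stop A n
    · exact inj_stop A (n+1)
    · intro y hy
      have h1 := (chainTop A hA n (A.map (xiFace (n+1) i).op y)).1 hy
      rw [map_map, xiE3 n i hi] at h1
      exact (chainTop A hA (n+1) y).2 h1
  · apply isPullback_of_types
    · intro p
      rw [map_map, map_map, xiC4 n jj hjj]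
    · exact inj_stop A (n+1)
    · exact inj_stop A n
    · intro y hy
      have h1 := (chainTop A hA (n+1) (A.map (xiSigma (n+1) jj).op y)).1 hy
      rw [map_map, xiE4 n jj hjj] at h1
      exact (chainTop A hA n y).2 h1

end DS3
end
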